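/- arXiv:2506.05037 — 6 statements merged into one kernel-verified Lean document; each statement's English description precedes it below -/
import Mathlib

section
/- Let 0 < s ≤ 1 and 0 < p < ∞. Let u : X → ℝ be measurable and finite μ-a.e., let g be an s-gradient of u, and let E, F ⊂ X be measurable sets of finite positive measure. Then |m_u(E) − m_u(F)|^p ≤ C(p) · D(E,F)^{sp} · ( ⨍_E g(x)^p dμ(x) + ⨍_F g(y)^p dμ(y) ), where D(E,F) = sup{d(x,y) : x ∈ E, y ∈ F} and C(p) > 0 is a constant depending only on p. -/
open MeasureTheory Metric Set Filter
open scoped ENNReal NNReal Topology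

noncomputable section
namespace Paper

variable {X : Type*} [MetricSpace X] [MeasurableSpace X]

/-- The median `m_u(E)` of a function `u` over a set `E`. -/
def median (μ : Measure X) (u : X → ℝ) (E : Set X) : ℝ :=
  sInf {a : ℝ | μ {x | x ∈ E ∧ a < u x} < μ E / 2}

/-- `g` is an `s`-gradient of `u` (with respect to `μ`). -/
def IsSGradient (μ : Measure X) (s : ℝ) (u : X → ℝ) (g : X → ℝ≥0∞) : Prop :=
  Measurable g ∧ ∃ N : Set X, μ N = 0 ∧ ∀ x ∉ N, ∀ y ∉ N,
    ENNReal.ofReal |u x - u y| ≤ ENNReal.ofReal (dist x y ^ s) * (g x + g y)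

/-- The `p`-th power of the `L^p` quasinorm of `u : X → ℝ` restricted to `F`. -/
def lpNormP (μ : Measure X) (p : ℝ) (u : X → ℝ) (F : Set X) : ℝ≥0∞ :=
  ∫⁻ x in F, ENNReal.ofReal |u x| ^ p ∂μ

/-- Membership in the homogeneous Hajłasz–Sobolev space `Ṁ^{s,p}(X)`:
`u` is measurable (hence finite everywhere, being real valued) and has an
`s`-gradient in `L^p`. -/
def MemHomHajlasz (μ : Measure X) (s p : ℝ) (u : X → ℝ) : Prop :=
  Measurable u ∧ ∃ g : X → ℝ≥0∞, IsSGradient μ s u g ∧ (∫⁻ x, g x ^ p ∂μ) < ⊤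

/-- The homogeneous Hajłasz quasi-seminorm `‖u‖_{Ṁ^{s,p}}`. -/
def hajlaszSeminorm (μ : Measure X) (s p : ℝ) (u : X → ℝ) : ℝ≥0∞ :=
  ⨅ (g : X → ℝ≥0∞) (_ : IsSGradient μ s u g), (∫⁻ x, g x ^ p ∂μ) ^ (1 / p)

/-- The quasi-seminorm `‖u‖_{M^{s,p}} = ‖u‖_{L^p} + ‖u‖_{Ṁ^{s,p}}`. -/
def hajlaszNorm (μ : Measure X) (s p : ℝ) (u : X → ℝ) : ℝ≥0∞ :=
  lpNormP μ p u Set.univ ^ (1 / p) + hajlaszSeminorm μ s p u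

/-- The capacity `Cap_{M^{s,p}}(E)`; the infimum over the empty set is `⊤ = ∞`. -/
def hajlaszCapacity (μ : Measure X) (s p : ℝ) (E : Set X) : ℝ≥0∞ :=
  ⨅ (u : X → ℝ) (_ : MemHomHajlasz μ s p u ∧ lpNormP μ p u Set.univ < ⊤ ∧
      ∃ U : Set X, IsOpen U ∧ E ⊆ U ∧ ∀ x ∈ U, 1 ≤ u x),
    hajlaszNorm μ s p u ^ p

/-- `M^{s,p}`-quasicontinuity of `u`. -/
def HajlaszQC (μ : Measure X) (s p : ℝ) (u : X → ℝ) : Prop :=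
  ∀ ε : ℝ, 0 < ε → ∃ E : Set X,
    hajlaszCapacity μ s p E < ENNReal.ofReal ε ∧ ContinuousOn u Eᶜ

/-- The variational relative capacity `cap_{s,p}(E,F)`. -/
def relCap (μ : Measure X) (s p : ℝ) (E F : Set X) : ℝ≥0∞ :=
  ⨅ (v : X → ℝ) (_ : MemHomHajlasz μ s p v ∧ HajlaszQC μ s p v ∧ ∀ x ∈ E, 1 ≤ v x),
    (lpNormP μ p v F / ENNReal.ofReal (Metric.diam F ^ (s * p)) +
      ⨅ (g : X → ℝ≥0∞) (_ : IsSGradient μ s v g), ∫⁻ x in F, g x ^ p ∂μ)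

/-- The annulus `A_r(O) = B(O, κ r) \ B(O, r)`. -/
def ann (κ : ℝ) (O : X) (r : ℝ) : Set X := ball O (κ * r) \ ball O r

/-- The enlarged annulus `Λ A_r(O) = B(O, Λ κ r) \ B(O, r / Λ)`. -/
def annL (κ Λ : ℝ) (O : X) (r : ℝ) : Set X := ball O (Λ * (κ * r)) \ ball O (r / Λ)

/-- `E` is `(s,p)`-thin at infinity with respect to the basepoint `O`. -/
def ThinAtInfinity (μ : Measure X) (s p κ : ℝ) (O : X) (E : Set X) : Prop :=
  ∀ Λ : ℝ, 1 < Λ →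
    Tendsto (fun m : ℕ =>
        ∑' j : ℕ, relCap μ s p (E ∩ ann κ O (κ ^ (m + j))) (annL κ Λ O (κ ^ (m + j))))
      atTop (𝓝 0)

/-- `u(x) → c` as `d(x,O) → ∞` along `x ∈ X \ E`. -/
def TendstoOutside (O : X) (E : Set X) (u : X → ℝ) (c : ℝ) : Prop :=
  ∀ ε : ℝ, 0 < ε → ∃ N : ℕ, ∀ x : X, x ∉ E → (N : ℝ) < dist x O → |u x - c| < ε

/-- The `ρ`-restricted Hausdorff content of codimension `d`, where the infimum runs
over all finite or countable coverings of `E` by balls of positive radii at most `ρ`. -/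
def hContent (μ : Measure X) (d : ℝ) (ρ : ℝ≥0∞) (E : Set X) : ℝ≥0∞ :=
  ⨅ (c : ℕ → X) (r : ℕ → ℝ) (J : Set ℕ)
    (_ : (∀ j ∈ J, 0 < r j ∧ ENNReal.ofReal (r j) ≤ ρ) ∧
        E ⊆ ⋃ j ∈ J, ball (c j) (r j)),
    ∑' j : J, μ (ball (c (j : ℕ)) (r (j : ℕ))) / ENNReal.ofReal (r (j : ℕ) ^ d)

/-- The homogeneous fractional Sobolev quasinorm `‖u‖_{Ẇ^{s,p}_q}`. -/
def fracNorm (μ : Measure X) (s p q : ℝ) (u : X → ℝ) : ℝ≥0∞ :=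
  (∫⁻ x, (∫⁻ y, ENNReal.ofReal |u x - u y| ^ q /
      (ENNReal.ofReal (dist x y ^ (s * q)) * μ (ball x (dist x y))) ∂μ) ^ (p / q) ∂μ) ^ (1 / p)

/-- Membership in the homogeneous fractional Sobolev space `Ẇ^{s,p}_q(X)`. -/
def MemFrac (μ : Measure X) (s p q : ℝ) (u : X → ℝ) : Prop :=
  Measurable u ∧ fracNorm μ s p q u < ⊤

/-- The capacity `Cap_{W^{s,p}_q}(E)`; the infimum over the empty set is `⊤ = ∞`. -/
def fracCapacity (μ : Measure X) (s p q : ℝ) (E : Set X) : ℝ≥0∞ :=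
  ⨅ (u : X → ℝ) (_ : MemFrac μ s p q u ∧ lpNormP μ p u Set.univ < ⊤ ∧
      ∃ U : Set X, IsOpen U ∧ E ⊆ U ∧ ∀ x ∈ U, 1 ≤ u x),
    (lpNormP μ p u Set.univ ^ (1 / p) + fracNorm μ s p q u) ^ p

/-- `W^{s,p}_q`-quasicontinuity of `u`. -/
def FracQC (μ : Measure X) (s p q : ℝ) (u : X → ℝ) : Prop :=
  ∀ ε : ℝ, 0 < ε → ∃ E : Set X,
    fracCapacity μ s p q E < ENNReal.ofReal ε ∧ ContinuousOn u Eᶜ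

section MedianFacts

variable {μ : Measure X} {u : X → ℝ} {E : Set X}

lemma medianSet_mono {a b : ℝ} (hab : a ≤ b)
    (h : a ∈ {a : ℝ | μ {x | x ∈ E ∧ a < u x} < μ E / 2}) :
    b ∈ {a : ℝ | μ {x | x ∈ E ∧ a < u x} < μ E / 2} := by
  refine lt_of_le_of_lt (measure_mono ?_) h
  exact fun x hx => ⟨hx.1, lt_of_le_of_lt hab hx.2⟩

lemma medianSet_nonempty [BorelSpace X] (hu : Measurable u) (hE : MeasurableSet E)
    (h0 : 0 < μ E) (ht : μ E < ⊤) :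
    {a : ℝ | μ {x | x ∈ E ∧ a < u x} < μ E / 2}.Nonempty := by
  set T : ℕ → Set X := fun n => {x | x ∈ E ∧ (n : ℝ) < u x} with hT
  have hmeas : ∀ n, MeasurableSet (T n) := fun n => hE.inter (hu measurableSet_Ioi)
  have hanti : Antitone T := by
    intro m n hmn x hx
    exact ⟨hx.1, lt_of_le_of_lt (by exact_mod_cast hmn) hx.2⟩
  have hempty : (⋂ n, T n) = ∅ := by
    ext x
    simp only [Set.mem_iInter, Set.mem_empty_iff_false, iff_false, not_forall]
    obtain ⟨n, hn⟩ := exists_nat_ge (u x)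
    exact ⟨n, fun hx => absurd hn (not_le.2 hx.2)⟩
  have htend : Tendsto (μ ∘ T) atTop (𝓝 0) := by
    have := tendsto_measure_iInter_atTop (μ := μ) (fun n => (hmeas n).nullMeasurableSet)
      hanti ⟨0, (lt_of_le_of_lt (measure_mono (fun x hx => hx.1)) ht).ne⟩
    rwa [hempty, measure_empty] at this
  have hpos : 0 < μ E / 2 := ENNReal.half_pos h0.ne'
  obtain ⟨n, hn⟩ := (htend.eventually_lt_const hpos).exists
  exact ⟨(n : ℝ), hn⟩

lemma medianSet_bddBelow [BorelSpace X] (hu : Measurable u) (hE : MeasurableSet E)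
    (h0 : 0 < μ E) (ht : μ E < ⊤) :
    BddBelow {a : ℝ | μ {x | x ∈ E ∧ a < u x} < μ E / 2} := by
  set T : ℕ → Set X := fun n => {x | x ∈ E ∧ -(n : ℝ) < u x} with hT
  have hmono : Monotone T := by
    intro m n hmn x hx
    refine ⟨hx.1, lt_of_le_of_lt ?_ hx.2⟩
    simp only [neg_le_neg_iff]
    exact_mod_cast hmn
  have hunion : (⋃ n, T n) = E := by
    ext x
    simp only [Set.mem_iUnion]
    constructor
    · rintro ⟨n, hn⟩; exact hn.1
    · intro hx
      obtain ⟨n, hn⟩ := exists_nat_gt (-(u x))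
      exact ⟨n, hx, by linarith⟩
  have htend : Tendsto (μ ∘ T) atTop (𝓝 (μ E)) := by
    have := tendsto_measure_iUnion_atTop (μ := μ) hmono
    rwa [hunion] at this
  have hlt : μ E / 2 < μ E := ENNReal.half_lt_self h0.ne' ht.ne
  obtain ⟨n, hn⟩ := (htend.eventually_const_lt hlt).exists
  refine ⟨-(n : ℝ), fun a ha => ?_⟩
  by_contra hcon
  push_neg at hcon
  have : μ (T n) ≤ μ {x | x ∈ E ∧ a < u x} :=
    measure_mono fun x hx => ⟨hx.1, lt_of_le_of_lt hcon.le hx.2⟩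
  exact absurd (lt_of_lt_of_le (lt_of_lt_of_le hn this) ha.le) (lt_irrefl _)

/-- At least half of `E` lies where `u ≤ median`. -/
lemma half_le_measure_le_median [BorelSpace X] (hu : Measurable u) (hE : MeasurableSet E)
    (h0 : 0 < μ E) (ht : μ E < ⊤) :
    μ E / 2 ≤ μ {x | x ∈ E ∧ u x ≤ median μ u E} := by
  set m := median μ u E with hm
  set S := {a : ℝ | μ {x | x ∈ E ∧ a < u x} < μ E / 2} with hS
  have hne : S.Nonempty := medianSet_nonempty hu hE h0 ht
  -- μ {x ∈ E, m < u x} ≤ μ E / 2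
  have hub : μ {x | x ∈ E ∧ m < u x} ≤ μ E / 2 := by
    have heq : {x | x ∈ E ∧ m < u x} = ⋃ n : ℕ, {x | x ∈ E ∧ m + 1 / (n + 1) < u x} := by
      ext x
      simp only [Set.mem_setOf_eq, Set.mem_iUnion]
      constructor
      · rintro ⟨hxE, hx⟩
        obtain ⟨n, hn⟩ := exists_nat_one_div_lt (sub_pos.2 hx)
        exact ⟨n, hxE, by push_cast at hn ⊢; linarith⟩
      · rintro ⟨n, hxE, hx⟩
        have : (0:ℝ) < 1 / ((n:ℝ) + 1) := by positivity
        exact ⟨hxE, by linarith⟩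
    have hmem : ∀ n : ℕ, μ {x | x ∈ E ∧ m + 1 / ((n:ℝ) + 1) < u x} < μ E / 2 := by
      intro n
      have hmS : m = sInf S := rfl
      have hlt : sInf S < m + 1 / ((n:ℝ) + 1) := by
        have : (0:ℝ) < 1 / ((n:ℝ) + 1) := by positivity
        rw [← hmS]; linarith
      obtain ⟨a, haS, ha⟩ := exists_lt_of_csInf_lt hne hlt
      exact medianSet_mono ha.le haS
    have hdir : Directed (· ⊆ ·) fun n : ℕ => {x | x ∈ E ∧ m + 1 / ((n:ℝ) + 1) < u x} := by
      refine (Monotone.directed_le ?_)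
      intro k n hkn x hx
      refine ⟨hx.1, lt_of_le_of_lt ?_ hx.2⟩
      have h1 : (0:ℝ) < (k:ℝ) + 1 := by positivity
      have h2 : ((k:ℝ) + 1) ≤ (n:ℝ) + 1 := by exact_mod_cast add_le_add_left hkn 1
      have := one_div_le_one_div_of_le h1 h2
      linarith
    rw [heq, hdir.measure_iUnion]
    exact iSup_le fun n => (hmem n).le
  -- complement bound
  have hsplit : μ E ≤ μ {x | x ∈ E ∧ u x ≤ m} + μ {x | x ∈ E ∧ m < u x} := by
    refine le_trans (measure_mono ?_) (measure_union_le _ _)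
    intro x hx
    rcases le_or_gt (u x) m with h | h
    · exact Or.inl ⟨hx, h⟩
    · exact Or.inr ⟨hx, h⟩
  have h2t : μ E / 2 ≠ ⊤ := (lt_of_le_of_lt ENNReal.half_le_self ht).ne
  have : μ E / 2 + μ E / 2 ≤ μ {x | x ∈ E ∧ u x ≤ m} + μ E / 2 := by
    rw [ENNReal.add_halves]
    exact le_trans hsplit (add_le_add_right hub _)
  exact (ENNReal.add_le_add_iff_right h2t).1 this

/-- At least half of `E` lies where `median ≤ u`. -/
lemma half_le_measure_median_le [BorelSpace X] (hu : Measurable u) (hE : MeasurableSet E)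
    (h0 : 0 < μ E) (ht : μ E < ⊤) :
    μ E / 2 ≤ μ {x | x ∈ E ∧ median μ u E ≤ u x} := by
  set m := median μ u E with hm
  set S := {a : ℝ | μ {x | x ∈ E ∧ a < u x} < μ E / 2} with hS
  have hbdd : BddBelow S := medianSet_bddBelow hu hE h0 ht
  set T : ℕ → Set X := fun n => {x | x ∈ E ∧ m - 1 / ((n:ℝ) + 1) < u x} with hT
  have hmeas : ∀ n, MeasurableSet (T n) := fun n => hE.inter (hu measurableSet_Ioi)
  have hanti : Antitone T := by
    intro k n hkn x hx
    refine ⟨hx.1, lt_of_le_of_lt ?_ hx.2⟩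
    have h1 : (0:ℝ) < (k:ℝ) + 1 := by positivity
    have h2 : ((k:ℝ) + 1) ≤ (n:ℝ) + 1 := by exact_mod_cast add_le_add_left hkn 1
    have := one_div_le_one_div_of_le h1 h2
    linarith
  have hinter : (⋂ n, T n) = {x | x ∈ E ∧ m ≤ u x} := by
    ext x
    simp only [Set.mem_iInter, hT, Set.mem_setOf_eq]
    constructor
    · intro h
      refine ⟨(h 0).1, ?_⟩
      by_contra hcon
      push_neg at hcon
      obtain ⟨n, hn⟩ := exists_nat_one_div_lt (sub_pos.2 hcon)
      have := (h n).2
      push_cast at hn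
      linarith
    · rintro ⟨hxE, hx⟩ n
      have : (0:ℝ) < 1 / ((n:ℝ) + 1) := by positivity
      exact ⟨hxE, by linarith⟩
  have hTlb : ∀ n, μ E / 2 ≤ μ (T n) := by
    intro n
    by_contra hcon
    push_neg at hcon
    have hmem : m - 1 / ((n:ℝ) + 1) ∈ S := hcon
    have hmS : m = sInf S := rfl
    have := csInf_le hbdd hmem
    rw [← hmS] at this
    have hpos : (0:ℝ) < 1 / ((n:ℝ) + 1) := by positivity
    linarith
  have htend : Tendsto (μ ∘ T) atTop (𝓝 (μ {x | x ∈ E ∧ m ≤ u x})) := by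
    have := tendsto_measure_iInter_atTop (μ := μ) (fun n => (hmeas n).nullMeasurableSet)
      hanti ⟨0, (lt_of_le_of_lt (measure_mono (fun x hx => hx.1)) ht).ne⟩
    rwa [hinter] at this
  exact ge_of_tendsto' htend hTlb

end MedianFacts

lemma add_rpow_le_two_rpow_mul (p : ℝ) (hp : 0 ≤ p) (a b : ℝ≥0∞) :
    (a + b) ^ p ≤ 2 ^ p * (a ^ p + b ^ p) := by
  have h : a + b ≤ 2 * (a ⊔ b) := by
    rw [two_mul]
    exact add_le_add le_sup_left le_sup_right
  calc (a + b) ^ p ≤ (2 * (a ⊔ b)) ^ p := ENNReal.rpow_le_rpow h hp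
    _ = 2 ^ p * (a ⊔ b) ^ p := ENNReal.mul_rpow_of_nonneg _ _ hp
    _ ≤ 2 ^ p * (a ^ p + b ^ p) := by
        refine mul_le_mul_right ?_ _
        rcases le_total a b with h' | h'
        · rw [sup_of_le_right h']; exact le_add_self
        · rw [sup_of_le_left h']; exact le_self_add

lemma biSup_edist_comm (E F : Set X) :
    (⨆ x ∈ E, ⨆ y ∈ F, edist x y) = ⨆ x ∈ F, ⨆ y ∈ E, edist x y := by
  apply le_antisymm
  · refine iSup₂_le fun x hx => iSup₂_le fun y hy => ?_
    rw [edist_comm]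
    exact le_trans (le_biSup (fun b => edist y b) hx)
      (le_biSup (fun a => ⨆ b ∈ E, edist a b) hy)
  · refine iSup₂_le fun x hx => iSup₂_le fun y hy => ?_
    rw [edist_comm]
    exact le_trans (le_biSup (fun b => edist y b) hx)
      (le_biSup (fun a => ⨆ b ∈ F, edist a b) hy)

/-- The one-sided key estimate, assuming `median μ u E ≤ median μ u F`. -/
lemma key_estimate [BorelSpace X] (μ : Measure X) (p : ℝ) (hp : 0 < p)
    (s : ℝ) (hs0 : 0 < s)
    (u : X → ℝ) (hu : Measurable u)
    (g : X → ℝ≥0∞) (hg : IsSGradient μ s u g)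
    (E F : Set X) (hE : MeasurableSet E) (hF : MeasurableSet F)
    (hE0 : 0 < μ E) (hEt : μ E < ⊤) (hF0 : 0 < μ F) (hFt : μ F < ⊤)
    (hle : median μ u E ≤ median μ u F) :
    ENNReal.ofReal (median μ u F - median μ u E) ^ p ≤
      (2 * 2 ^ p) * (⨆ x ∈ E, ⨆ y ∈ F, edist x y) ^ (s * p) *
        ((∫⁻ x in E, g x ^ p ∂μ) / μ E + (∫⁻ y in F, g y ^ p ∂μ) / μ F) := by
  obtain ⟨hgmeas, N, hN, hgrad⟩ := hg
  set mE := median μ u E with hmE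
  set mF := median μ u F with hmF
  set D := (⨆ x ∈ E, ⨆ y ∈ F, edist x y) with hD
  set A := {x | x ∈ E ∧ u x ≤ mE} with hA
  set B := {y | y ∈ F ∧ mF ≤ u y} with hB
  have hAm : MeasurableSet A := hE.inter (hu measurableSet_Iic)
  have hBm : MeasurableSet B := hF.inter (hu measurableSet_Ici)
  have hA2 : μ E / 2 ≤ μ A := half_le_measure_le_median hu hE hE0 hEt
  have hB2 : μ F / 2 ≤ μ B := half_le_measure_median_le hu hF hF0 hFt
  have hA0 : μ A ≠ 0 := (lt_of_lt_of_le (ENNReal.half_pos hE0.ne') hA2).ne'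
  have hB0 : μ B ≠ 0 := (lt_of_lt_of_le (ENNReal.half_pos hF0.ne') hB2).ne'
  have hAt : μ A ≠ ⊤ := (lt_of_le_of_lt (measure_mono fun x hx => hx.1) hEt).ne
  have hBt : μ B ≠ ⊤ := (lt_of_le_of_lt (measure_mono fun x hx => hx.1) hFt).ne
  set c := ENNReal.ofReal (mF - mE) ^ p with hc
  set K := D ^ (s * p) * 2 ^ p with hK
  set IA := ∫⁻ x in A, g x ^ p ∂μ with hIA
  set IB := ∫⁻ y in B, g y ^ p ∂μ with hIB
  set IE := ∫⁻ x in E, g x ^ p ∂μ with hIE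
  set IF := ∫⁻ y in F, g y ^ p ∂μ with hIF
  have hgp : Measurable fun x => g x ^ p := hgmeas.pow measurable_const
  -- pointwise estimate
  have hpt : ∀ x ∈ A, x ∉ N → ∀ y ∈ B, y ∉ N → c ≤ K * (g x ^ p + g y ^ p) := by
    intro x hx hxN y hy hyN
    have h1 : ENNReal.ofReal (mF - mE) ≤ D ^ s * (g x + g y) := by
      have hreal : mF - mE ≤ |u x - u y| := by
        have h' : u y - u x ≤ |u x - u y| := by
          rw [abs_sub_comm]; exact le_abs_self _
        have := hx.2; have := hy.2
        linarith
      have hdD : ENNReal.ofReal (dist x y ^ s) ≤ D ^ s := by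
        rw [← ENNReal.ofReal_rpow_of_nonneg dist_nonneg hs0.le, ← edist_dist]
        refine ENNReal.rpow_le_rpow ?_ hs0.le
        exact le_trans (le_biSup (fun y => edist x y) hy.1)
          (le_biSup (fun x => ⨆ y ∈ F, edist x y) hx.1)
      calc ENNReal.ofReal (mF - mE) ≤ ENNReal.ofReal |u x - u y| :=
            ENNReal.ofReal_le_ofReal hreal
        _ ≤ ENNReal.ofReal (dist x y ^ s) * (g x + g y) := hgrad x hxN y hyN
        _ ≤ D ^ s * (g x + g y) := mul_le_mul_left hdD _
    calc c ≤ (D ^ s * (g x + g y)) ^ p := ENNReal.rpow_le_rpow h1 hp.le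
      _ = (D ^ s) ^ p * (g x + g y) ^ p := ENNReal.mul_rpow_of_nonneg _ _ hp.le
      _ ≤ (D ^ s) ^ p * (2 ^ p * (g x ^ p + g y ^ p)) :=
          mul_le_mul_right (add_rpow_le_two_rpow_mul p hp.le _ _) _
      _ = K * (g x ^ p + g y ^ p) := by
          rw [hK, ENNReal.rpow_mul, mul_assoc]
  have haeN : ∀ᵐ z ∂μ, z ∉ N := by
    rw [← compl_compl N] at hN ⊢
    exact (MeasureTheory.measure_eq_zero_iff_ae_notMem).1 hN
  -- integrate in y over B, for fixed good x
  have step1 : ∀ x ∈ A, x ∉ N → c * μ B ≤ K * (g x ^ p * μ B + IB) := by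
    intro x hx hxN
    have hle1 : ∫⁻ y in B, c ∂μ ≤ ∫⁻ y in B, K * (g x ^ p + g y ^ p) ∂μ := by
      refine lintegral_mono_ae ?_
      have h1 : ∀ᵐ y ∂μ.restrict B, y ∉ N := ae_restrict_of_ae haeN
      have h2 : ∀ᵐ y ∂μ.restrict B, y ∈ B := ae_restrict_mem hBm
      filter_upwards [h1, h2] with y hyN hyB
      exact hpt x hx hxN y hyB hyN
    rw [setLIntegral_const] at hle1
    calc c * μ B ≤ ∫⁻ y in B, K * (g x ^ p + g y ^ p) ∂μ := hle1
      _ = K * ∫⁻ y in B, (g x ^ p + g y ^ p) ∂μ :=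
          lintegral_const_mul K ((measurable_const.add hgp))
      _ = K * (g x ^ p * μ B + IB) := by
          rw [lintegral_add_left measurable_const, setLIntegral_const]
  -- integrate in x over A
  have step2 : c * μ B * μ A ≤ K * (IA * μ B + IB * μ A) := by
    have hle2 : ∫⁻ x in A, c * μ B ∂μ ≤ ∫⁻ x in A, K * (g x ^ p * μ B + IB) ∂μ := by
      refine lintegral_mono_ae ?_
      have h1 : ∀ᵐ x ∂μ.restrict A, x ∉ N := ae_restrict_of_ae haeN
      have h2 : ∀ᵐ x ∂μ.restrict A, x ∈ A := ae_restrict_mem hAm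
      filter_upwards [h1, h2] with x hxN hxA
      exact step1 x hxA hxN
    rw [setLIntegral_const] at hle2
    calc c * μ B * μ A ≤ ∫⁻ x in A, K * (g x ^ p * μ B + IB) ∂μ := hle2
      _ = K * ∫⁻ x in A, (g x ^ p * μ B + IB) ∂μ :=
          lintegral_const_mul K ((hgp.mul measurable_const).add measurable_const)
      _ = K * (IA * μ B + IB * μ A) := by
          rw [lintegral_add_right _ measurable_const, setLIntegral_const,
            lintegral_mul_const _ hgp]
  -- divide
  have step3 : c ≤ K * (IA / μ A + IB / μ B) := by
    rw [← ENNReal.mul_le_mul_iff_left (a := c) (c := μ A * μ B)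
      (mul_ne_zero hA0 hB0) (ENNReal.mul_ne_top hAt hBt)]
    calc c * (μ A * μ B) = c * μ B * μ A := by ring
      _ ≤ K * (IA * μ B + IB * μ A) := step2
      _ = K * (IA / μ A * μ A * μ B + IB / μ B * μ B * μ A) := by
          rw [ENNReal.div_mul_cancel hA0 hAt, ENNReal.div_mul_cancel hB0 hBt]
      _ = K * (IA / μ A + IB / μ B) * (μ A * μ B) := by ring
  -- replace A,B by E,F
  have hdivE : IA / μ A ≤ 2 * (IE / μ E) := by
    have h1 : IA / μ A ≤ IE / (μ E / 2) :=
      ENNReal.div_le_div (lintegral_mono_set fun x hx => hx.1) hA2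
    refine le_trans h1 (le_of_eq ?_)
    rw [ENNReal.div_eq_inv_mul, div_eq_mul_inv, div_eq_mul_inv,
      ENNReal.mul_inv (Or.inl hE0.ne') (Or.inl hEt.ne), inv_inv]
    ring
  have hdivF : IB / μ B ≤ 2 * (IF / μ F) := by
    have h1 : IB / μ B ≤ IF / (μ F / 2) :=
      ENNReal.div_le_div (lintegral_mono_set fun x hx => hx.1) hB2
    refine le_trans h1 (le_of_eq ?_)
    rw [ENNReal.div_eq_inv_mul, div_eq_mul_inv, div_eq_mul_inv,
      ENNReal.mul_inv (Or.inl hF0.ne') (Or.inl hFt.ne), inv_inv]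
    ring
  calc c ≤ K * (IA / μ A + IB / μ B) := step3
    _ ≤ K * (2 * (IE / μ E) + 2 * (IF / μ F)) :=
        mul_le_mul_right (add_le_add hdivE hdivF) _
    _ = (2 * 2 ^ p) * D ^ (s * p) * (IE / μ E + IF / μ F) := by
        rw [hK]; ring

/-- Lemma 3.4: a median oscillation estimate in terms of an
`s`-gradient, with a constant `C = C(p)` depending only on `p`. -/
theorem statement2 [BorelSpace X] (μ : Measure X) (p : ℝ) (hp : 0 < p) :
    ∃ C : ℝ≥0∞, 0 < C ∧ C < ⊤ ∧
      ∀ (s : ℝ), 0 < s → s ≤ 1 →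
      ∀ (u : X → ℝ), Measurable u →
      ∀ (g : X → ℝ≥0∞), IsSGradient μ s u g →
      ∀ (E F : Set X), MeasurableSet E → MeasurableSet F →
        0 < μ E → μ E < ⊤ → 0 < μ F → μ F < ⊤ →
        ENNReal.ofReal |median μ u E - median μ u F| ^ p ≤
          C * (⨆ x ∈ E, ⨆ y ∈ F, edist x y) ^ (s * p) *
            ((∫⁻ x in E, g x ^ p ∂μ) / μ E + (∫⁻ y in F, g y ^ p ∂μ) / μ F) := by
  refine ⟨2 * 2 ^ p, ?_, ?_, ?_⟩
  · exact ENNReal.mul_pos (by norm_num) (ENNReal.rpow_pos (by norm_num) (by norm_num)).ne'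
  · exact ENNReal.mul_lt_top (by norm_num)
      (ENNReal.rpow_lt_top_of_nonneg hp.le (by norm_num))
  · intro s hs0 _hs1 u hu g hg E F hE hF hE0 hEt hF0 hFt
    rcases le_total (median μ u E) (median μ u F) with h | h
    · have h2 := key_estimate μ p hp s hs0 u hu g hg E F hE hF hE0 hEt hF0 hFt h
      rwa [abs_sub_comm, abs_of_nonneg (sub_nonneg.2 h)]
    · have h2 := key_estimate μ p hp s hs0 u hu g hg F E hF hE hF0 hFt hE0 hEt h
      rwa [abs_of_nonneg (sub_nonneg.2 h), biSup_edist_comm E F,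
        add_comm ((∫⁻ x in E, g x ^ p ∂μ) / μ E)]

end Paper
end
end

section
/- Let 0 < s ≤ 1 and 0 < p < ∞. If u, v : X → ℝ are M^{s,p}-quasicontinuous functions with u = v μ-almost everywhere, then Cap_{M^{s,p}}({x ∈ X : u(x) ≠ v(x)}) = 0, i.e. u = v M^{s,p}-quasieverywhere. -/
open MeasureTheory Metric Set Filter
open scoped ENNReal NNReal Topology

noncomputable section
namespace Paper

variable {X : Type*} [MetricSpace X] [MeasurableSpace X]

private lemma add_rpow_le_aux (a b : ℝ≥0∞) {q : ℝ} (hq : 0 ≤ q) :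
    (a + b) ^ q ≤ 2 ^ q * (a ^ q + b ^ q) := by
  calc (a + b) ^ q ≤ (2 * max a b) ^ q := by
        apply ENNReal.rpow_le_rpow _ hq
        rw [two_mul]
        exact add_le_add (le_max_left a b) (le_max_right a b)
    _ = 2 ^ q * (max a b) ^ q := ENNReal.mul_rpow_of_nonneg _ _ hq
    _ ≤ 2 ^ q * (a ^ q + b ^ q) := by
        gcongr
        rcases le_total a b with h | h
        · rw [max_eq_right h]; exact le_add_self
        · rw [max_eq_left h]; exact self_le_add_right _ _

/-- Lemma 4.8: two `M^{s,p}`-quasicontinuous functions agreeing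
`μ`-a.e. agree `M^{s,p}`-quasieverywhere. -/
theorem statement4 [BorelSpace X]
    (μ : Measure X) (hcomp : μ.IsComplete)
    (hball : ∀ (x : X) (r : ℝ), 0 < r → 0 < μ (ball x r) ∧ μ (ball x r) < ⊤)
    (hdiam : EMetric.diam (Set.univ : Set X) = ⊤)
    (cμ : ℝ) (hcμ : 1 ≤ cμ)
    (hdoub : ∀ (x : X) (r : ℝ), 0 < r → μ (ball x (2 * r)) ≤ ENNReal.ofReal cμ * μ (ball x r))
    (cR κ : ℝ) (hcR0 : 0 < cR) (hcR1 : cR < 1) (hκ : 1 < κ)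
    (hrev : ∀ (x : X) (r : ℝ), 0 < r → μ (ball x r) ≤ ENNReal.ofReal cR * μ (ball x (κ * r)))
    (s p : ℝ) (hs0 : 0 < s) (hs1 : s ≤ 1) (hp : 0 < p)
    (u v : X → ℝ) (hu : Measurable u) (hv : Measurable v)
    (huqc : HajlaszQC μ s p u) (hvqc : HajlaszQC μ s p v)
    (hae : u =ᵐ[μ] v) :
    hajlaszCapacity μ s p {x : X | u x ≠ v x} = 0 := by
  classical
  have hp0 : (0:ℝ) < 1 / p := by positivity
  have hDnull : μ {x : X | u x ≠ v x} = 0 := ae_iff.mp hae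
  set C : ℝ≥0∞ := 6 * (2:ℝ≥0∞) ^ (1 / p) with hCdef
  have hCne : C ≠ ⊤ := by
    apply ENNReal.mul_ne_top (by norm_num)
    exact ENNReal.rpow_ne_top_of_nonneg hp0.le (by norm_num)
  have hCpne : C ^ p ≠ ⊤ := ENNReal.rpow_ne_top_of_nonneg hp.le hCne
  -- key quantitative step
  have key : ∀ ε : ℝ, 0 < ε →
      hajlaszCapacity μ s p {x : X | u x ≠ v x} ≤ C ^ p * ENNReal.ofReal ε := by
    intro ε hε
    obtain ⟨E₁, hE₁cap, hE₁cont⟩ := huqc ε hε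
    obtain ⟨E₂, hE₂cap, hE₂cont⟩ := hvqc ε hε
    rw [hajlaszCapacity, iInf_lt_iff] at hE₁cap hE₂cap
    obtain ⟨φ₁, h₁⟩ := hE₁cap
    rw [iInf_lt_iff] at h₁
    obtain ⟨⟨hφ₁mem, hφ₁lp, U₁, hU₁open, hE₁U₁, hφ₁ge⟩, hφ₁norm⟩ := h₁
    obtain ⟨φ₂, h₂⟩ := hE₂cap
    rw [iInf_lt_iff] at h₂
    obtain ⟨⟨hφ₂mem, hφ₂lp, U₂, hU₂open, hE₂U₂, hφ₂ge⟩, hφ₂norm⟩ := h₂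
    set δ : ℝ≥0∞ := ENNReal.ofReal ε ^ (1 / p) with hδdef
    have hδ0 : 0 < δ := ENNReal.rpow_pos (ENNReal.ofReal_pos.mpr hε) ENNReal.ofReal_ne_top
    have hδtop : δ ≠ ⊤ := ENNReal.rpow_ne_top_of_nonneg hp0.le ENNReal.ofReal_ne_top
    have hδp : δ ^ p = ENNReal.ofReal ε := by
      rw [hδdef, ← ENNReal.rpow_mul, one_div_mul_cancel hp.ne', ENNReal.rpow_one]
    have hnorm : ∀ (φ : X → ℝ), hajlaszNorm μ s p φ ^ p < ENNReal.ofReal ε →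
        hajlaszNorm μ s p φ ≤ δ := by
      intro φ hφ
      have h1 : hajlaszNorm μ s p φ = (hajlaszNorm μ s p φ ^ p) ^ (1 / p) := by
        rw [← ENNReal.rpow_mul, mul_one_div_cancel hp.ne', ENNReal.rpow_one]
      rw [h1]
      exact ENNReal.rpow_le_rpow hφ.le hp0.le
    have hnorm₁ := hnorm φ₁ hφ₁norm
    have hnorm₂ := hnorm φ₂ hφ₂norm
    rw [hajlaszNorm] at hnorm₁ hnorm₂
    have hA₁ : lpNormP μ p φ₁ Set.univ ^ (1 / p) ≤ δ := le_self_add.trans hnorm₁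
    have hA₂ : lpNormP μ p φ₂ Set.univ ^ (1 / p) ≤ δ := le_self_add.trans hnorm₂
    have hS₁ : hajlaszSeminorm μ s p φ₁ ≤ δ := le_add_self.trans hnorm₁
    have hS₂ : hajlaszSeminorm μ s p φ₂ ≤ δ := le_add_self.trans hnorm₂
    -- extract near-optimal gradients
    have hg : ∀ (φ : X → ℝ), hajlaszSeminorm μ s p φ ≤ δ →
        ∃ g : X → ℝ≥0∞, IsSGradient μ s φ g ∧ (∫⁻ x, g x ^ p ∂μ) ^ (1 / p) < δ + δ := by
      intro φ hφ
      have hlt : hajlaszSeminorm μ s p φ < δ + δ :=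
        lt_of_le_of_lt hφ (ENNReal.lt_add_right hδtop hδ0.ne')
      rw [hajlaszSeminorm, iInf_lt_iff] at hlt
      obtain ⟨g, hg⟩ := hlt
      rw [iInf_lt_iff] at hg
      obtain ⟨hgrad, hglt⟩ := hg
      exact ⟨g, hgrad, hglt⟩
    obtain ⟨g₁, hg₁grad, hg₁lt⟩ := hg φ₁ hS₁
    obtain ⟨g₂, hg₂grad, hg₂lt⟩ := hg φ₂ hS₂
    have hIfromlt : ∀ (g : X → ℝ≥0∞), (∫⁻ x, g x ^ p ∂μ) ^ (1 / p) < δ + δ →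
        (∫⁻ x, g x ^ p ∂μ) ≤ (δ + δ) ^ p := by
      intro g hlt
      have h1 : (∫⁻ x, g x ^ p ∂μ) = ((∫⁻ x, g x ^ p ∂μ) ^ (1 / p)) ^ p := by
        rw [← ENNReal.rpow_mul, one_div_mul_cancel hp.ne', ENNReal.rpow_one]
      rw [h1]
      exact ENNReal.rpow_le_rpow hlt.le hp.le
    have hI₁ := hIfromlt g₁ hg₁lt
    have hI₂ := hIfromlt g₂ hg₂lt
    have h2δp : (δ + δ) ^ p ≠ ⊤ :=
      ENNReal.rpow_ne_top_of_nonneg hp.le (by simp [ENNReal.add_ne_top, hδtop])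
    -- the open set W
    set G := U₁ ∪ U₂ with hGdef
    have hGopen : IsOpen G := hU₁open.union hU₂open
    have hGsub₁ : Gᶜ ⊆ E₁ᶜ := compl_subset_compl.mpr (hE₁U₁.trans subset_union_left)
    have hGsub₂ : Gᶜ ⊆ E₂ᶜ := compl_subset_compl.mpr (hE₂U₂.trans subset_union_right)
    have hcont : ContinuousOn (fun x => u x - v x) Gᶜ :=
      (hE₁cont.mono hGsub₁).sub (hE₂cont.mono hGsub₂)
    have hballs : ∀ x ∈ {x : X | u x ≠ v x} ∩ Gᶜ,
        ∃ r > 0, ∀ y ∈ ball x r, y ∈ Gᶜ → u y ≠ v y := by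
      intro x hx
      have hwx : u x - v x ≠ 0 := sub_ne_zero.mpr hx.1
      have hc := hcont x hx.2
      rw [Metric.continuousWithinAt_iff] at hc
      obtain ⟨r, hr0, hr⟩ := hc |u x - v x| (abs_pos.mpr hwx)
      refine ⟨r, hr0, fun y hy hyG heq => ?_⟩
      have hd := hr hyG (mem_ball.mp hy)
      rw [sub_eq_zero.mpr heq] at hd
      simp only [Real.dist_eq, zero_sub, abs_neg] at hd
      exact lt_irrefl _ hd
    choose! r hr0 hrprop using hballs
    set W := G ∪ ⋃ (x : X) (_ : x ∈ {x : X | u x ≠ v x} ∩ Gᶜ), ball x (r x) with hWdef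
    have hWopen : IsOpen W :=
      hGopen.union (isOpen_iUnion fun x => isOpen_iUnion fun _ => isOpen_ball)
    have hDW : {x : X | u x ≠ v x} ⊆ W := by
      intro x hx
      by_cases hxG : x ∈ G
      · exact Or.inl hxG
      · exact Or.inr (mem_iUnion₂.mpr ⟨x, ⟨hx, hxG⟩, mem_ball_self (hr0 x ⟨hx, hxG⟩)⟩)
    have hWG : W \ G ⊆ {x : X | u x ≠ v x} := by
      rintro y ⟨hyW, hyG⟩
      rcases hyW with h | h
      · exact absurd h hyG
      · obtain ⟨x, hx, hyball⟩ := mem_iUnion₂.mp h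
        exact hrprop x hx y hyball hyG
    have hWGnull : μ (W \ G) = 0 := measure_mono_null hWG hDnull
    have hWGmeas : MeasurableSet (W \ G) :=
      hWopen.measurableSet.diff hGopen.measurableSet
    -- the test function ψ
    set φm : X → ℝ := fun x => max (φ₁ x) (φ₂ x) with hφmdef
    set ψ : X → ℝ := (W \ G).piecewise (fun _ => (1:ℝ)) φm with hψdef
    have hψmeas : Measurable ψ :=
      Measurable.piecewise hWGmeas measurable_const (hφ₁mem.1.max hφ₂mem.1)
    have hψeq : ∀ x, x ∉ W \ G → ψ x = φm x := fun x hx =>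
      Set.piecewise_eq_of_notMem _ _ _ hx
    have hψae : ∀ᵐ x ∂μ, ψ x = φm x := by
      refine ae_iff.mpr (measure_mono_null (fun x hx => ?_) hWGnull)
      by_contra hxn
      exact hx (hψeq x hxn)
    -- the gradient g₁ + g₂ works for ψ
    obtain ⟨hg₁meas, N₁, hN₁, hprop₁⟩ := hg₁grad
    obtain ⟨hg₂meas, N₂, hN₂, hprop₂⟩ := hg₂grad
    set g : X → ℝ≥0∞ := fun x => g₁ x + g₂ x with hgdef
    have hggrad : IsSGradient μ s ψ g := by
      refine ⟨hg₁meas.add hg₂meas, N₁ ∪ N₂ ∪ (W \ G),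
        measure_union_null (measure_union_null hN₁ hN₂) hWGnull, ?_⟩
      intro x hx y hy
      simp only [Set.mem_union, not_or] at hx hy
      rw [hψeq x hx.2, hψeq y hy.2]
      have key1 := hprop₁ x hx.1.1 y hy.1.1
      have key2 := hprop₂ x hx.1.2 y hy.1.2
      have hmax : |φm x - φm y| ≤ max |φ₁ x - φ₁ y| |φ₂ x - φ₂ y| :=
        abs_max_sub_max_le_max _ _ _ _
      rcases le_total |φ₁ x - φ₁ y| |φ₂ x - φ₂ y| with h | h
      · calc ENNReal.ofReal |φm x - φm y|
            ≤ ENNReal.ofReal |φ₂ x - φ₂ y| := by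
              exact ENNReal.ofReal_le_ofReal (hmax.trans (by rw [max_eq_right h]))
          _ ≤ ENNReal.ofReal (dist x y ^ s) * (g₂ x + g₂ y) := key2
          _ ≤ ENNReal.ofReal (dist x y ^ s) * (g x + g y) := by
              gcongr <;> simp [hgdef]
      · calc ENNReal.ofReal |φm x - φm y|
            ≤ ENNReal.ofReal |φ₁ x - φ₁ y| := by
              exact ENNReal.ofReal_le_ofReal (hmax.trans (by rw [max_eq_left h]))
          _ ≤ ENNReal.ofReal (dist x y ^ s) * (g₁ x + g₁ y) := key1
          _ ≤ ENNReal.ofReal (dist x y ^ s) * (g x + g y) := by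
              gcongr <;> simp [hgdef]
    -- integral bound on the gradient
    have hgint : (∫⁻ x, g x ^ p ∂μ) ≤ 2 ^ p * ((∫⁻ x, g₁ x ^ p ∂μ) + ∫⁻ x, g₂ x ^ p ∂μ) := by
      calc (∫⁻ x, g x ^ p ∂μ)
          ≤ ∫⁻ x, 2 ^ p * (g₁ x ^ p + g₂ x ^ p) ∂μ :=
            lintegral_mono fun x => add_rpow_le_aux _ _ hp.le
        _ = 2 ^ p * ((∫⁻ x, g₁ x ^ p ∂μ) + ∫⁻ x, g₂ x ^ p ∂μ) := by
            rw [lintegral_const_mul (f := fun x => g₁ x ^ p + g₂ x ^ p) _ ((hg₁meas.pow_const p).add (hg₂meas.pow_const p)),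
              lintegral_add_left (hg₁meas.pow_const p)]
    have h2pne : (2:ℝ≥0∞) ^ p ≠ ⊤ := ENNReal.rpow_ne_top_of_nonneg hp.le (by norm_num)
    have hgintfin : (∫⁻ x, g x ^ p ∂μ) < ⊤ := by
      refine lt_of_le_of_lt hgint ?_
      exact ENNReal.mul_lt_top h2pne.lt_top
        (ENNReal.add_lt_top.mpr ⟨lt_of_le_of_lt hI₁ h2δp.lt_top, lt_of_le_of_lt hI₂ h2δp.lt_top⟩)
    -- Lp bound on ψ
    have hlpcongr : lpNormP μ p ψ Set.univ = ∫⁻ x, ENNReal.ofReal |φm x| ^ p ∂μ := by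
      rw [lpNormP, Measure.restrict_univ]
      refine lintegral_congr_ae (hψae.mono fun x hx => ?_)
      dsimp only
      rw [hx]
    have hφmpt : ∀ x, ENNReal.ofReal |φm x| ^ p ≤
        2 ^ p * (ENNReal.ofReal |φ₁ x| ^ p + ENNReal.ofReal |φ₂ x| ^ p) := by
      intro x
      refine le_trans (ENNReal.rpow_le_rpow ?_ hp.le) (add_rpow_le_aux _ _ hp.le)
      calc ENNReal.ofReal |φm x| ≤ ENNReal.ofReal (|φ₁ x| + |φ₂ x|) :=
            ENNReal.ofReal_le_ofReal
              ((abs_max_le_max_abs_abs).trans (max_le (le_add_of_nonneg_right (abs_nonneg _))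
                (le_add_of_nonneg_left (abs_nonneg _))))
        _ ≤ ENNReal.ofReal |φ₁ x| + ENNReal.ofReal |φ₂ x| := ENNReal.ofReal_add_le
    have hmeasφ : ∀ (φ : X → ℝ), Measurable φ →
        Measurable fun x => ENNReal.ofReal |φ x| ^ p := fun φ hφ =>
      (ENNReal.measurable_ofReal.comp hφ.abs).pow_const p
    have hlpψ : lpNormP μ p ψ Set.univ ≤
        2 ^ p * (lpNormP μ p φ₁ Set.univ + lpNormP μ p φ₂ Set.univ) := by
      rw [hlpcongr]
      calc (∫⁻ x, ENNReal.ofReal |φm x| ^ p ∂μ)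
          ≤ ∫⁻ x, 2 ^ p * (ENNReal.ofReal |φ₁ x| ^ p + ENNReal.ofReal |φ₂ x| ^ p) ∂μ :=
            lintegral_mono hφmpt
        _ = 2 ^ p * ((∫⁻ x, ENNReal.ofReal |φ₁ x| ^ p ∂μ) + ∫⁻ x, ENNReal.ofReal |φ₂ x| ^ p ∂μ) := by
            rw [lintegral_const_mul (f := fun x => ENNReal.ofReal |φ₁ x| ^ p + ENNReal.ofReal |φ₂ x| ^ p) _ ((hmeasφ φ₁ hφ₁mem.1).add (hmeasφ φ₂ hφ₂mem.1)),
              lintegral_add_left (hmeasφ φ₁ hφ₁mem.1)]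
        _ = 2 ^ p * (lpNormP μ p φ₁ Set.univ + lpNormP μ p φ₂ Set.univ) := by
            rw [lpNormP, lpNormP, Measure.restrict_univ]
    -- convert bounds through rpow
    have hAδ : ∀ (φ : X → ℝ), lpNormP μ p φ Set.univ ^ (1 / p) ≤ δ →
        lpNormP μ p φ Set.univ ≤ δ ^ p := by
      intro φ h
      have h1 : lpNormP μ p φ Set.univ = (lpNormP μ p φ Set.univ ^ (1 / p)) ^ p := by
        rw [← ENNReal.rpow_mul, one_div_mul_cancel hp.ne', ENNReal.rpow_one]
      rw [h1]
      exact ENNReal.rpow_le_rpow h hp.le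
    have hmul_rpow : ∀ a : ℝ≥0∞, (2 ^ p * (a + a)) ^ (1 / p) = 2 * 2 ^ (1 / p) * a ^ (1 / p) := by
      intro a
      rw [← two_mul, ← mul_assoc, ENNReal.mul_rpow_of_nonneg _ _ hp0.le,
        ENNReal.mul_rpow_of_nonneg _ _ hp0.le, ← ENNReal.rpow_mul,
        mul_one_div_cancel hp.ne', ENNReal.rpow_one]
    -- bound hajlaszNorm ψ
    have hψlpfin : lpNormP μ p ψ Set.univ < ⊤ := by
      refine lt_of_le_of_lt hlpψ ?_
      exact ENNReal.mul_lt_top h2pne.lt_top (ENNReal.add_lt_top.mpr ⟨hφ₁lp, hφ₂lp⟩)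
    have hδpinv : (δ ^ p) ^ (1 / p) = δ := by
      rw [← ENNReal.rpow_mul, mul_one_div_cancel hp.ne', ENNReal.rpow_one]
    have hterm1 : lpNormP μ p ψ Set.univ ^ (1 / p) ≤ 2 * 2 ^ (1 / p) * δ := by
      calc lpNormP μ p ψ Set.univ ^ (1 / p)
          ≤ (2 ^ p * (δ ^ p + δ ^ p)) ^ (1 / p) := by
            refine ENNReal.rpow_le_rpow (hlpψ.trans ?_) hp0.le
            gcongr
            · exact hAδ φ₁ hA₁
            · exact hAδ φ₂ hA₂
        _ = 2 * 2 ^ (1 / p) * (δ ^ p) ^ (1 / p) := hmul_rpow _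
        _ = 2 * 2 ^ (1 / p) * δ := by rw [hδpinv]
    have hterm2 : hajlaszSeminorm μ s p ψ ≤ 2 * 2 ^ (1 / p) * (δ + δ) := by
      have hle : hajlaszSeminorm μ s p ψ ≤ (∫⁻ x, g x ^ p ∂μ) ^ (1 / p) := by
        rw [hajlaszSeminorm]
        exact iInf₂_le g hggrad
      refine hle.trans ?_
      calc (∫⁻ x, g x ^ p ∂μ) ^ (1 / p)
          ≤ (2 ^ p * ((δ + δ) ^ p + (δ + δ) ^ p)) ^ (1 / p) := by
            refine ENNReal.rpow_le_rpow (hgint.trans ?_) hp0.le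
            gcongr
        _ = 2 * 2 ^ (1 / p) * ((δ + δ) ^ p) ^ (1 / p) := hmul_rpow _
        _ = 2 * 2 ^ (1 / p) * (δ + δ) := by
            rw [← ENNReal.rpow_mul, mul_one_div_cancel hp.ne', ENNReal.rpow_one]
    have hψnorm : hajlaszNorm μ s p ψ ≤ C * δ := by
      rw [hajlaszNorm]
      calc lpNormP μ p ψ Set.univ ^ (1 / p) + hajlaszSeminorm μ s p ψ
          ≤ 2 * 2 ^ (1 / p) * δ + 2 * 2 ^ (1 / p) * (δ + δ) :=
            add_le_add hterm1 hterm2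
        _ = 6 * 2 ^ (1 / p) * δ := by ring
        _ = C * δ := by rw [hCdef]
    -- ψ is a valid test function for the capacity of {u ≠ v}
    have hψge : ∀ x ∈ W, (1:ℝ) ≤ ψ x := by
      intro x hx
      by_cases hxWG : x ∈ W \ G
      · rw [hψdef, Set.piecewise_eq_of_mem _ _ _ hxWG]
      · have hxG : x ∈ G := by
          by_contra hxG
          exact hxWG ⟨hx, hxG⟩
        rw [hψeq x hxWG]
        rcases hxG with h | h
        · exact (hφ₁ge x h).trans (le_max_left _ _)
        · exact (hφ₂ge x h).trans (le_max_right _ _)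
    have hcaple : hajlaszCapacity μ s p {x : X | u x ≠ v x} ≤ hajlaszNorm μ s p ψ ^ p := by
      rw [hajlaszCapacity]
      exact iInf₂_le ψ ⟨⟨hψmeas, g, hggrad, hgintfin⟩, hψlpfin, W, hWopen, hDW, hψge⟩
    calc hajlaszCapacity μ s p {x : X | u x ≠ v x}
        ≤ hajlaszNorm μ s p ψ ^ p := hcaple
      _ ≤ (C * δ) ^ p := ENNReal.rpow_le_rpow hψnorm hp.le
      _ = C ^ p * δ ^ p := ENNReal.mul_rpow_of_nonneg _ _ hp.le
      _ = C ^ p * ENNReal.ofReal ε := by rw [hδp]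
  -- conclude via a limiting argument
  have T : Tendsto (fun n : ℕ => C ^ p * ENNReal.ofReal (1 / (n + 1))) atTop (𝓝 0) := by
    have h1 : Tendsto (fun n : ℕ => ENNReal.ofReal (1 / (n + 1))) atTop (𝓝 0) := by
      have := ENNReal.tendsto_ofReal tendsto_one_div_add_atTop_nhds_zero_nat
      simpa using this
    have := ENNReal.Tendsto.const_mul h1 (Or.inr hCpne)
    simpa using this
  have hle : hajlaszCapacity μ s p {x : X | u x ≠ v x} ≤ 0 := by
    refine ge_of_tendsto T (Eventually.of_forall fun n => ?_)
    exact key (1 / (n + 1)) (by positivity)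
  exact le_antisymm hle zero_le

end Paper
end
end

section
/- Let 0 < p < ∞ and let u ∈ L^p(X) be measurable and finite μ-a.e. Then for every O ∈ X, lim_{j→∞} m_u(A_{κ^j}(O)) = 0. -/
open MeasureTheory Metric Set Filter
open scoped ENNReal NNReal Topology

noncomputable section
namespace Paper

variable {X : Type*} [MetricSpace X] [MeasurableSpace X]

/-- If the set where `|u| > ε` occupies less than half of `E`, then the median of `u`
over `E` is at most `ε` in absolute value. -/
lemma abs_median_le (μ : Measure X) (u : X → ℝ) (E : Set X)
    (ε : ℝ) (hε : 0 ≤ ε)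
    (h : μ {x | x ∈ E ∧ ε < |u x|} < μ E / 2) (hEfin : μ E ≠ ⊤) :
    |median μ u E| ≤ ε := by
  set S := {a : ℝ | μ {x | x ∈ E ∧ a < u x} < μ E / 2} with hS
  have hεS : ε ∈ S := by
    refine lt_of_le_of_lt (measure_mono ?_) h
    intro x hx
    exact ⟨hx.1, lt_of_lt_of_le hx.2 (le_abs_self _)⟩
  have hhalf : μ E / 2 ≠ ⊤ := by
    simp [ENNReal.div_eq_top, hEfin]
  have hlb : ∀ a ∈ S, -ε ≤ a := by
    intro a ha
    by_contra hcon
    push_neg at hcon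
    have hsub : E ⊆ {x | x ∈ E ∧ a < u x} ∪ {x | x ∈ E ∧ ε < |u x|} := by
      intro x hx
      rcases lt_or_ge ε |u x| with h1 | h1
      · exact Or.inr ⟨hx, h1⟩
      · exact Or.inl ⟨hx, lt_of_lt_of_le hcon (neg_le_of_abs_le h1)⟩
    have hlt : μ E < μ E := by
      calc μ E ≤ μ ({x | x ∈ E ∧ a < u x} ∪ {x | x ∈ E ∧ ε < |u x|}) := measure_mono hsub
      _ ≤ μ {x | x ∈ E ∧ a < u x} + μ {x | x ∈ E ∧ ε < |u x|} := measure_union_le _ _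
      _ < μ E / 2 + μ E / 2 := ENNReal.add_lt_add_of_lt_of_le (ne_top_of_lt h) ha h.le
      _ = μ E := ENNReal.add_halves _
    exact lt_irrefl _ hlt
  rw [abs_le]
  exact ⟨le_csInf ⟨ε, hεS⟩ hlb, csInf_le ⟨-ε, hlb⟩ hεS⟩

/-- Lemma 5.1: for `u ∈ L^p(X)`, the medians over the annuli
`A_{κ^j}(O)` tend to `0` as `j → ∞`, for every basepoint `O`. -/
theorem statement5 [BorelSpace X]
    (μ : Measure X) (hcomp : μ.IsComplete)
    (hball : ∀ (x : X) (r : ℝ), 0 < r → 0 < μ (ball x r) ∧ μ (ball x r) < ⊤)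
    (hdiam : EMetric.diam (Set.univ : Set X) = ⊤)
    (cμ : ℝ) (hcμ : 1 ≤ cμ)
    (hdoub : ∀ (x : X) (r : ℝ), 0 < r → μ (ball x (2 * r)) ≤ ENNReal.ofReal cμ * μ (ball x r))
    (cR κ : ℝ) (hcR0 : 0 < cR) (hcR1 : cR < 1) (hκ : 1 < κ)
    (hrev : ∀ (x : X) (r : ℝ), 0 < r → μ (ball x r) ≤ ENNReal.ofReal cR * μ (ball x (κ * r)))
    (p : ℝ) (hp : 0 < p)
    (u : X → ℝ) (hu : Measurable u) (huLp : lpNormP μ p u Set.univ < ⊤)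
    (O : X) :
    Tendsto (fun j : ℕ => median μ u (ann κ O (κ ^ j))) atTop (𝓝 0) := by
  have hκ0 : (0:ℝ) < κ := lt_trans one_pos hκ
  set f : X → ℝ≥0∞ := fun x => ENNReal.ofReal |u x| ^ p with hf_def
  have hf : Measurable f := (ENNReal.measurable_ofReal.comp hu.abs).pow_const p
  set ν : Measure X := μ.withDensity f with hν_def
  have hν_apply : ∀ s : Set X, MeasurableSet s → ν s = ∫⁻ x in s, f x ∂μ :=
    fun s hs => withDensity_apply f hs
  have hνfin : ν Set.univ ≠ ⊤ := by
    rw [hν_apply _ MeasurableSet.univ]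
    exact huLp.ne
  -- the annuli have measure bounded below by δ > 0
  set δ : ℝ≥0∞ := (1 - ENNReal.ofReal cR) * μ (ball O 1) with hδ_def
  have hcRlt1 : ENNReal.ofReal cR < 1 := ENNReal.ofReal_lt_one.2 hcR1
  have hδpos : 0 < δ := by
    apply ENNReal.mul_pos
    · exact (tsub_pos_of_lt hcRlt1).ne'
    · exact (hball O 1 one_pos).1.ne'
  have hAnn : ∀ j : ℕ, δ ≤ μ (ann κ O (κ ^ j)) ∧ μ (ann κ O (κ ^ j)) ≠ ⊤ := by
    intro j
    set r : ℝ := κ ^ j with hr_def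
    have hr1 : (1:ℝ) ≤ r := one_le_pow₀ hκ.le
    have hr0 : (0:ℝ) < r := lt_of_lt_of_le one_pos hr1
    have hκr : (1:ℝ) ≤ κ * r := by nlinarith
    have hbig : μ (ball O (κ * r)) ≠ ⊤ := (hball O (κ * r) (by linarith)).2.ne
    have hsubball : ball O r ⊆ ball O (κ * r) :=
      ball_subset_ball (le_mul_of_one_le_left hr0.le hκ.le)
    have hdiff : μ (ann κ O r) = μ (ball O (κ * r)) - μ (ball O r) :=
      measure_diff hsubball measurableSet_ball.nullMeasurableSet (hball O r hr0).2.ne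
    constructor
    · calc δ = (1 - ENNReal.ofReal cR) * μ (ball O 1) := rfl
        _ ≤ (1 - ENNReal.ofReal cR) * μ (ball O (κ * r)) :=
            mul_le_mul_right (measure_mono (ball_subset_ball hκr)) _
        _ = 1 * μ (ball O (κ * r)) - ENNReal.ofReal cR * μ (ball O (κ * r)) := by
            rw [ENNReal.sub_mul (fun _ _ => hbig)]
        _ = μ (ball O (κ * r)) - ENNReal.ofReal cR * μ (ball O (κ * r)) := by rw [one_mul]
        _ ≤ μ (ball O (κ * r)) - μ (ball O r) := tsub_le_tsub_left (hrev O r hr0) _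
        _ = μ (ann κ O r) := hdiff.symm
    · rw [hdiff]
      exact ne_top_of_le_ne_top hbig tsub_le_self
  -- tail integrals tend to 0
  have htail : Tendsto (fun j : ℕ => ν (ball O (κ ^ j))ᶜ) atTop (𝓝 0) := by
    have hκpow : Tendsto (fun j : ℕ => κ ^ j) atTop atTop :=
      tendsto_pow_atTop_atTop_of_one_lt hκ
    have hanti : Antitone (fun j : ℕ => (ball O (κ ^ j))ᶜ) := by
      intro i j hij
      exact compl_subset_compl.2 (ball_subset_ball (pow_le_pow_right₀ hκ.le hij))
    have hiInter : ⋂ j : ℕ, (ball O (κ ^ j))ᶜ = (∅ : Set X) := by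
      ext x
      simp only [mem_iInter, mem_compl_iff, mem_ball, not_lt, mem_empty_iff_false, iff_false,
        not_forall, not_le]
      obtain ⟨j, hj⟩ := (hκpow.eventually_gt_atTop (dist x O)).exists
      exact ⟨j, hj⟩
    have h := tendsto_measure_iInter_atTop (μ := ν)
      (fun j => measurableSet_ball.compl.nullMeasurableSet) hanti
      ⟨0, ne_top_of_le_ne_top hνfin (measure_mono (subset_univ _))⟩
    rw [hiInter] at h
    simpa [Function.comp_def] using h
  -- main argument
  rw [Metric.tendsto_atTop]
  intro ε hε
  have hε2 : 0 < ε / 2 := half_pos hε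
  have hεp : 0 < (ε / 2) ^ p := Real.rpow_pos_of_pos hε2 p
  set T : ℝ≥0∞ := ENNReal.ofReal ((ε / 2) ^ p) * (δ / 2) with hT_def
  have hTpos : 0 < T := by
    apply ENNReal.mul_pos
    · exact (ENNReal.ofReal_pos.2 hεp).ne'
    · exact (ENNReal.half_pos hδpos.ne').ne'
  obtain ⟨N, hN⟩ := eventually_atTop.1 (htail.eventually (gt_mem_nhds hTpos))
  refine ⟨N, fun j hj => ?_⟩
  rw [Real.dist_eq, sub_zero]
  refine lt_of_le_of_lt ?_ (half_lt_self hε)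
  set A : Set X := ann κ O (κ ^ j) with hA_def
  refine abs_median_le μ u A (ε / 2) hε2.le ?_ (hAnn j).2
  -- Chebyshev
  have hr0 : (0:ℝ) < κ ^ j := pow_pos hκ0 j
  have hSsub : {x | x ∈ A ∧ ε / 2 < |u x|} ⊆ (ball O (κ ^ j))ᶜ :=
    fun x hx => hx.1.2
  have hSm : MeasurableSet {x | x ∈ A ∧ ε / 2 < |u x|} := by
    have : {x | x ∈ A ∧ ε / 2 < |u x|} = A ∩ {x | ε / 2 < |u x|} := rfl
    rw [this]
    exact (measurableSet_ball.diff measurableSet_ball).inter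
      (measurableSet_lt measurable_const hu.abs)
  have hcheb : ENNReal.ofReal ((ε / 2) ^ p) * μ {x | x ∈ A ∧ ε / 2 < |u x|}
      ≤ ν (ball O (κ ^ j))ᶜ := by
    rw [hν_apply _ measurableSet_ball.compl]
    calc ENNReal.ofReal ((ε / 2) ^ p) * μ {x | x ∈ A ∧ ε / 2 < |u x|}
        = ∫⁻ _ in {x | x ∈ A ∧ ε / 2 < |u x|}, ENNReal.ofReal ((ε / 2) ^ p) ∂μ := by
          rw [setLIntegral_const]
      _ ≤ ∫⁻ x in {x | x ∈ A ∧ ε / 2 < |u x|}, f x ∂μ := by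
          refine setLIntegral_mono hf fun x hx => ?_
          rw [← ENNReal.ofReal_rpow_of_pos hε2]
          exact ENNReal.rpow_le_rpow (ENNReal.ofReal_le_ofReal hx.2.le) hp.le
      _ ≤ ∫⁻ x in (ball O (κ ^ j))ᶜ, f x ∂μ := lintegral_mono_set hSsub
  have hlt : ENNReal.ofReal ((ε / 2) ^ p) * μ {x | x ∈ A ∧ ε / 2 < |u x|} < T :=
    lt_of_le_of_lt hcheb (hN j hj)
  have hμS : μ {x | x ∈ A ∧ ε / 2 < |u x|} < δ / 2 := by
    rw [hT_def] at hlt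
    exact (ENNReal.mul_lt_mul_iff_right (ENNReal.ofReal_pos.2 hεp).ne'
      ENNReal.ofReal_ne_top).1 hlt
  exact lt_of_lt_of_le hμS (ENNReal.div_le_div_right (hAnn j).1 2)

end Paper
end
end

section
/- Let 0 < s ≤ 1 and 0 < p < ∞ satisfy sp < σ, where σ is an exponent from the iterated reverse doubling condition. Let u ∈ Ṁ^{s,p}(X). Then there exists a constant c ∈ ℝ such that for every O ∈ X, lim_{j→∞} m_u(A_{κ^j}(O)) = c; in particular the limit exists and is independent of the basepoint O. -/
open MeasureTheory Metric Set Filter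
open scoped ENNReal NNReal Topology

noncomputable section
namespace Paper

variable {X : Type*} [MetricSpace X] [MeasurableSpace X]

set_option linter.unusedSectionVars false
set_option linter.unusedVariables false

lemma pow_rpow_commute {κ : ℝ} (hκ : 0 < κ) (j : ℕ) (y : ℝ) :
    ((κ ^ j : ℝ)) ^ y = (κ ^ y) ^ j := by
  rw [← Real.rpow_natCast κ j, ← Real.rpow_natCast (κ ^ y) j, ← Real.rpow_mul hκ.le,
    ← Real.rpow_mul hκ.le, mul_comm]

lemma algebra_aux {κ s σ p m0 β' : ℝ} (hκ : 1 < κ) (hs : 0 < s) (hp : 0 < p)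
    (hm0 : 0 < m0) (hβ : 0 < β') {L' : ℝ} (hL' : 0 ≤ L') (j : ℕ) :
    6 * (2 * κ ^ (j + 2)) ^ s * (2 * L' / (m0 * (κ ^ j : ℝ) ^ σ * β')) ^ (1 / p)
      = (6 * 2 ^ s * (κ ^ 2 : ℝ) ^ s * (2 * L' / (m0 * β')) ^ (1 / p)) * (κ ^ (s - σ / p)) ^ j := by
  have hκ0 : (0:ℝ) < κ := by linarith
  have hx : (0:ℝ) < (κ:ℝ) ^ j := pow_pos hκ0 j
  have hxσ : (0:ℝ) < ((κ:ℝ) ^ j) ^ σ := Real.rpow_pos_of_pos hx σ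
  set A := 2 * L' / (m0 * β') with hA_def
  have hA : 0 ≤ A := by positivity
  have h1 : 2 * L' / (m0 * ((κ:ℝ) ^ j) ^ σ * β') = A / ((κ:ℝ) ^ j) ^ σ := by
    rw [hA_def, div_div, mul_right_comm]
  have h2 : (2 * (κ:ℝ) ^ (j + 2)) ^ s = 2 ^ s * ((κ:ℝ) ^ j) ^ s * ((κ:ℝ) ^ 2) ^ s := by
    rw [show (κ:ℝ) ^ (j + 2) = (κ:ℝ) ^ j * (κ:ℝ) ^ 2 by ring,
      show (2:ℝ) * ((κ:ℝ) ^ j * (κ:ℝ) ^ 2) = 2 * (κ:ℝ) ^ j * (κ:ℝ) ^ 2 by ring,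
      Real.mul_rpow (by positivity) (by positivity),
      Real.mul_rpow (by positivity) (by positivity)]
  have h3 : (A / ((κ:ℝ) ^ j) ^ σ) ^ (1 / p)
      = A ^ (1 / p) / ((κ:ℝ) ^ j) ^ (σ / p) := by
    rw [Real.div_rpow hA hxσ.le, ← Real.rpow_mul hx.le]
    congr 2
    field_simp
  rw [h1, h2, h3]
  have h4 : ((κ:ℝ) ^ j) ^ s / ((κ:ℝ) ^ j) ^ (σ / p) = ((κ:ℝ) ^ j) ^ (s - σ / p) :=
    (Real.rpow_sub hx s (σ / p)).symm
  have h5 : ((κ:ℝ) ^ j) ^ (s - σ / p) = (κ ^ (s - σ / p)) ^ j := pow_rpow_commute hκ0 j _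
  rw [← h5, ← h4]
  field_simp

lemma medianSet_meas (μ : Measure X) {u : X → ℝ} (hu : Measurable u) {E : Set X}
    (hE : MeasurableSet E) (a : ℝ) : MeasurableSet {x | x ∈ E ∧ a < u x} := by
  have : {x | x ∈ E ∧ a < u x} = E ∩ u ⁻¹' (Set.Ioi a) := by ext x; exact Iff.rfl
  rw [this]; exact hE.inter (hu measurableSet_Ioi)

lemma medianSet_anti (μ : Measure X) (u : X → ℝ) (E : Set X) {a b : ℝ} (hab : a ≤ b) :
    μ {x | x ∈ E ∧ b < u x} ≤ μ {x | x ∈ E ∧ a < u x} :=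
  measure_mono fun x hx => ⟨hx.1, lt_of_le_of_lt hab hx.2⟩

lemma median_aux (μ : Measure X) {u : X → ℝ} (hu : Measurable u) {E : Set X}
    (hE : MeasurableSet E) (h0 : 0 < μ E) (hfin : μ E < ⊤) :
    {a : ℝ | μ {x | x ∈ E ∧ a < u x} < μ E / 2}.Nonempty ∧
    BddBelow {a : ℝ | μ {x | x ∈ E ∧ a < u x} < μ E / 2} := by
  constructor
  · -- nonempty
    set s : ℕ → Set X := fun n => {x | x ∈ E ∧ (n : ℝ) < u x} with hs
    have hmeas : ∀ n, NullMeasurableSet (s n) μ := fun n =>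
      (medianSet_meas μ hu hE _).nullMeasurableSet
    have hanti : Antitone s := fun m n hmn x hx => ⟨hx.1, lt_of_le_of_lt (by exact_mod_cast hmn) hx.2⟩
    have hfin' : ∃ n, μ (s n) ≠ ⊤ :=
      ⟨0, (lt_of_le_of_lt (measure_mono fun x hx => hx.1) hfin).ne⟩
    have hempty : (⋂ n, s n) = ∅ := by
      ext x; simp only [Set.mem_iInter, Set.mem_empty_iff_false, iff_false]
      intro h
      obtain ⟨n, hn⟩ := exists_nat_gt (u x)
      exact absurd (h n).2 (not_lt.2 hn.le)
    have ht := tendsto_measure_iInter_atTop hmeas hanti hfin'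
    rw [hempty, measure_empty] at ht
    have := ht.eventually (eventually_mem_set.2 (Iio_mem_nhds (ENNReal.half_pos h0.ne')))
    obtain ⟨n, hn⟩ := this.exists
    exact ⟨(n : ℝ), hn⟩
  · -- bdd below
    set s : ℕ → Set X := fun n => {x | x ∈ E ∧ -(n : ℝ) < u x} with hs
    have hmono : Monotone s := fun m n hmn x hx =>
      ⟨hx.1, lt_of_le_of_lt (neg_le_neg (by exact_mod_cast hmn)) hx.2⟩
    have hunion : (⋃ n, s n) = E := by
      ext x
      simp only [Set.mem_iUnion]
      constructor
      · rintro ⟨n, hn⟩; exact hn.1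
      · intro hx
        obtain ⟨n, hn⟩ := exists_nat_gt (-(u x))
        exact ⟨n, hx, by linarith⟩
    have ht := tendsto_measure_iUnion_atTop (μ := μ) hmono
    rw [hunion] at ht
    have := ht.eventually (eventually_mem_set.2 (Ioi_mem_nhds (ENNReal.half_lt_self h0.ne' hfin.ne)))
    obtain ⟨n, hn⟩ := this.exists
    refine ⟨-(n : ℝ), fun a ha => ?_⟩
    by_contra hcon
    push_neg at hcon
    have : μ (s n) ≤ μ {x | x ∈ E ∧ a < u x} := medianSet_anti μ u E hcon.le
    exact absurd (lt_of_lt_of_le hn this) (not_lt.2 ha.le)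

lemma measure_lt_of_median_lt (μ : Measure X) {u : X → ℝ} (hu : Measurable u) {E : Set X}
    (hE : MeasurableSet E) (h0 : 0 < μ E) (hfin : μ E < ⊤) {a : ℝ}
    (ha : median μ u E < a) : μ {x | x ∈ E ∧ a < u x} < μ E / 2 := by
  obtain ⟨hne, hbdd⟩ := median_aux μ hu hE h0 hfin
  obtain ⟨b, hb, hba⟩ := (csInf_lt_iff hbdd hne).1 ha
  exact lt_of_le_of_lt (medianSet_anti μ u E hba.le) hb

lemma le_measure_of_lt_median (μ : Measure X) {u : X → ℝ} (hu : Measurable u) {E : Set X}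
    (hE : MeasurableSet E) (h0 : 0 < μ E) (hfin : μ E < ⊤) {a : ℝ}
    (ha : a < median μ u E) : μ E / 2 ≤ μ {x | x ∈ E ∧ a < u x} := by
  obtain ⟨hne, hbdd⟩ := median_aux μ hu hE h0 hfin
  by_contra hcon
  push_neg at hcon
  exact absurd (csInf_le hbdd hcon) (not_le.2 ha)


-- key one-sided estimate: if medians differ by ≥ t, the gradient integral is large
lemma integral_lower_of_median_gap (μ : Measure X) (hcomp : μ.IsComplete)
    {s p : ℝ} (hs0 : 0 < s) (hp : 0 < p)
    {u : X → ℝ} (hu : Measurable u) {g : X → ℝ≥0∞} (hg : IsSGradient μ s u g)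
    {z : X} {R : ℝ} (hR : 0 < R)
    {E1 E2 : Set X} (hE1m : MeasurableSet E1) (hE2m : MeasurableSet E2)
    (hE1 : E1 ⊆ ball z R) (hE2 : E2 ⊆ ball z R)
    {M : ℝ} (hM : 0 < M) (hM1 : ENNReal.ofReal M ≤ μ E1) (hM2 : ENNReal.ofReal M ≤ μ E2)
    (hE1fin : μ E1 < ⊤) (hE2fin : μ E2 < ⊤)
    {t : ℝ} (ht : 0 < t) (hgap : t ≤ median μ u E2 - median μ u E1) :

    ENNReal.ofReal ((t / (6 * (2 * R) ^ s)) ^ p) * (ENNReal.ofReal M / 2)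
      ≤ ∫⁻ x, g x ^ p ∂μ := by
  obtain ⟨hgmeas, N, hN, hgrad⟩ := hg
  obtain ⟨a, ha_def⟩ : ∃ a : ℝ, a = median μ u E1 + t / 3 := ⟨_, rfl⟩
  obtain ⟨b, hb_def⟩ : ∃ b : ℝ, b = median μ u E2 - t / 3 := ⟨_, rfl⟩
  have h01 : 0 < μ E1 := lt_of_lt_of_le (ENNReal.ofReal_pos.2 hM) hM1
  have h02 : 0 < μ E2 := lt_of_lt_of_le (ENNReal.ofReal_pos.2 hM) hM2
  set S1 : Set X := {x | x ∈ E1 ∧ u x ≤ a} with hS1_def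
  set S2 : Set X := {x | x ∈ E2 ∧ b < u x} with hS2_def
  have hS1m : MeasurableSet S1 := by
    have h : S1 = E1 ∩ u ⁻¹' (Set.Iic a) := by ext x; exact Iff.rfl
    rw [h]; exact hE1m.inter (hu measurableSet_Iic)
  have hS2m : MeasurableSet S2 := by
    have h : S2 = E2 ∩ u ⁻¹' (Set.Ioi b) := by ext x; exact Iff.rfl
    rw [h]; exact hE2m.inter (hu measurableSet_Ioi)
  have hS1meas : μ E1 / 2 ≤ μ S1 := by
    by_contra hcon
    push_neg at hcon
    have hlt : μ {x | x ∈ E1 ∧ a < u x} < μ E1 / 2 :=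
      measure_lt_of_median_lt μ hu hE1m h01 hE1fin (by rw [ha_def]; linarith)
    have hsub : E1 ⊆ S1 ∪ {x | x ∈ E1 ∧ a < u x} := fun x hx => by
      rcases le_or_gt (u x) a with h | h
      · exact Or.inl ⟨hx, h⟩
      · exact Or.inr ⟨hx, h⟩
    have h2 := (measure_mono hsub).trans (measure_union_le (μ := μ) _ _)
    have hlt2 : μ S1 + μ {x | x ∈ E1 ∧ a < u x} < μ E1 / 2 + μ E1 / 2 :=
      ENNReal.add_lt_add hcon hlt
    rw [ENNReal.add_halves] at hlt2
    exact absurd (lt_of_le_of_lt h2 hlt2) (lt_irrefl _)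
  have hS2meas : μ E2 / 2 ≤ μ S2 :=
    le_measure_of_lt_median μ hu hE2m h02 hE2fin (by rw [hb_def]; linarith)
  have hRs : (0:ℝ) < (2 * R) ^ s := Real.rpow_pos_of_pos (by linarith) s
  set τ : ℝ≥0∞ := ENNReal.ofReal (t / (3 * (2 * R) ^ s)) with hτ_def
  have hNm : MeasurableSet N := hcomp.out' N hN
  have hpair : ∀ x ∈ S1 \ N, ∀ y ∈ S2 \ N, τ ≤ g x + g y := by
    rintro x ⟨hxS, hxN⟩ y ⟨hyS, hyN⟩
    have hxb : x ∈ ball z R := hE1 hxS.1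
    have hyb : y ∈ ball z R := hE2 hyS.1
    have hdxy : dist x y < 2 * R := by
      have h3 := dist_triangle x z y
      have h1 : dist x z < R := mem_ball.1 hxb
      have h2 : dist z y < R := by rw [dist_comm]; exact mem_ball.1 hyb
      linarith
    have h1 : u x ≤ a := hxS.2
    have h2 : b < u y := hyS.2
    have hpos : 0 < u y - u x := by rw [ha_def] at h1; rw [hb_def] at h2; linarith
    have huxy : t / 3 ≤ |u x - u y| := by
      rw [abs_sub_comm, abs_of_pos hpos]
      rw [ha_def] at h1; rw [hb_def] at h2; linarith
    have hds : (dist x y) ^ s ≤ (2 * R) ^ s :=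
      Real.rpow_le_rpow dist_nonneg hdxy.le hs0.le
    have step : ENNReal.ofReal (t / 3) ≤ ENNReal.ofReal ((2 * R) ^ s) * (g x + g y) :=
      calc ENNReal.ofReal (t / 3) ≤ ENNReal.ofReal |u x - u y| := ENNReal.ofReal_le_ofReal huxy
        _ ≤ ENNReal.ofReal ((dist x y) ^ s) * (g x + g y) := hgrad x hxN y hyN
        _ ≤ ENNReal.ofReal ((2 * R) ^ s) * (g x + g y) :=
            mul_le_mul_left (ENNReal.ofReal_le_ofReal hds) _
    have hτ' : τ = ENNReal.ofReal (t / 3) / ENNReal.ofReal ((2 * R) ^ s) := by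
      rw [hτ_def, ← ENNReal.ofReal_div_of_pos hRs]
      congr 1
      field_simp
    rw [hτ', ENNReal.div_le_iff (by simp [hRs]) (by simp), mul_comm]
    exact step
  have key : ∃ T : Set X, MeasurableSet T ∧ (∀ x ∈ T, τ / 2 ≤ g x) ∧ ENNReal.ofReal M / 2 ≤ μ T := by
    by_cases hcase : ∀ x ∈ S1 \ N, τ / 2 ≤ g x
    · refine ⟨S1 \ N, hS1m.diff hNm, hcase, ?_⟩
      rw [measure_diff_null hN]
      exact le_trans (ENNReal.div_le_div_right hM1 2) hS1meas
    · push_neg at hcase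
      obtain ⟨x₀, hx₀, hgx₀⟩ := hcase
      refine ⟨S2 \ N, hS2m.diff hNm, fun y hy => ?_, ?_⟩
      · by_contra hcon
        push_neg at hcon
        have h4 := ENNReal.add_lt_add hgx₀ hcon
        rw [ENNReal.add_halves] at h4
        exact absurd (hpair x₀ hx₀ y hy) (not_le.2 h4)
      · rw [measure_diff_null hN]
        exact le_trans (ENNReal.div_le_div_right hM2 2) hS2meas
  obtain ⟨T, hTm, hTg, hTμ⟩ := key
  have hbound : (τ / 2) ^ p * (ENNReal.ofReal M / 2) ≤ ∫⁻ x, g x ^ p ∂μ :=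
    calc (τ / 2) ^ p * (ENNReal.ofReal M / 2) ≤ (τ / 2) ^ p * μ T :=
          mul_le_mul_right hTμ _
      _ = ∫⁻ _ in T, (τ / 2) ^ p ∂μ := (setLIntegral_const T _).symm
      _ ≤ ∫⁻ x in T, g x ^ p ∂μ :=
          lintegral_mono_ae ((ae_restrict_iff' hTm).2 (.of_forall fun x hx =>
            ENNReal.rpow_le_rpow (hTg x hx) hp.le))
      _ ≤ ∫⁻ x, g x ^ p ∂μ := setLIntegral_le_lintegral T _
  refine le_trans (le_of_eq ?_) hbound
  congr 1
  have hτ2 : τ / 2 = ENNReal.ofReal (t / (6 * (2 * R) ^ s)) := by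
    rw [show t / (6 * (2 * R) ^ s) = (t / (3 * (2 * R) ^ s)) / 2 by rw [show (6:ℝ) * (2 * R) ^ s = 3 * (2 * R) ^ s * 2 by ring, ← div_div]]
    rw [ENNReal.ofReal_div_of_pos two_pos, ENNReal.ofReal_ofNat, hτ_def]
  rw [hτ2, ← ENNReal.ofReal_rpow_of_pos (by positivity)]


lemma median_diff_le (μ : Measure X) (hcomp : μ.IsComplete)
    {s p : ℝ} (hs0 : 0 < s) (hp : 0 < p)
    {u : X → ℝ} (hu : Measurable u) {g : X → ℝ≥0∞} (hg : IsSGradient μ s u g)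
    (hL : (∫⁻ x, g x ^ p ∂μ) < ⊤)
    {z : X} {R : ℝ} (hR : 0 < R)
    {E1 E2 : Set X} (hE1m : MeasurableSet E1) (hE2m : MeasurableSet E2)
    (hE1 : E1 ⊆ ball z R) (hE2 : E2 ⊆ ball z R)
    {M : ℝ} (hM : 0 < M) (hM1 : ENNReal.ofReal M ≤ μ E1) (hM2 : ENNReal.ofReal M ≤ μ E2)
    (hE1fin : μ E1 < ⊤) (hE2fin : μ E2 < ⊤) :
    |median μ u E1 - median μ u E2| ≤
      6 * (2 * R) ^ s * (2 * (∫⁻ x, g x ^ p ∂μ).toReal / M) ^ (1 / p) := by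
  set L' := (∫⁻ x, g x ^ p ∂μ).toReal with hL'def
  have hRs : (0:ℝ) < (2 * R) ^ s := Real.rpow_pos_of_pos (by linarith) s
  set D := 6 * (2 * R) ^ s with hD_def
  have hD0 : 0 < D := by positivity
  set T := D * (2 * L' / M) ^ (1 / p) with hT_def
  have hL'0 : 0 ≤ L' := ENNReal.toReal_nonneg
  have hT0 : 0 ≤ T := by positivity
  refine le_of_forall_gt_imp_ge_of_dense fun t htT => ?_
  have ht : 0 < t := lt_of_le_of_lt hT0 htT
  -- the strict upper bound on the integral for this t
  have hup : ∫⁻ x, g x ^ p ∂μ < ENNReal.ofReal ((t / D) ^ p) * (ENNReal.ofReal M / 2) := by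
    have hTD : T / D = (2 * L' / M) ^ (1 / p) := by
      rw [hT_def]; field_simp
    have hTDp : (T / D) ^ p = 2 * L' / M := by
      rw [hTD, ← Real.rpow_mul (by positivity), one_div, inv_mul_cancel₀ hp.ne',
        Real.rpow_one]
    have hmono : (T / D) ^ p < (t / D) ^ p :=
      Real.rpow_lt_rpow (by positivity) (by gcongr) hp
    have hstep : L' < (t / D) ^ p * (M / 2) := by
      have h2 := mul_lt_mul_of_pos_right (hTDp ▸ hmono) (half_pos hM)
      have h3 : 2 * L' / M * (M / 2) = L' := by field_simp
      linarith
    calc ∫⁻ x, g x ^ p ∂μ = ENNReal.ofReal L' := (ENNReal.ofReal_toReal hL.ne).symm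
      _ < ENNReal.ofReal ((t / D) ^ p * (M / 2)) :=
          (ENNReal.ofReal_lt_ofReal_iff (by positivity)).2 hstep
      _ = ENNReal.ofReal ((t / D) ^ p) * (ENNReal.ofReal M / 2) := by
          rw [ENNReal.ofReal_mul (by positivity), ENNReal.ofReal_div_of_pos two_pos,
            ENNReal.ofReal_ofNat]
  have hlow := fun (E1' E2' : Set X) hE1m' hE2m' hE1' hE2' hM1' hM2' hE1fin' hE2fin'
      (hgap : t ≤ median μ u E2' - median μ u E1') =>
    integral_lower_of_median_gap μ hcomp hs0 hp hu hg (z := z) hR hE1m' hE2m' hE1' hE2' hM hM1' hM2'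
      hE1fin' hE2fin' ht hgap
  have key : ∀ (E1' E2' : Set X), MeasurableSet E1' → MeasurableSet E2' →
      E1' ⊆ ball z R → E2' ⊆ ball z R → ENNReal.ofReal M ≤ μ E1' → ENNReal.ofReal M ≤ μ E2' →
      μ E1' < ⊤ → μ E2' < ⊤ → median μ u E2' - median μ u E1' < t := by
    intro E1' E2' h1 h2 h3 h4 h5 h6 h7 h8
    by_contra hcon
    push_neg at hcon
    have := hlow E1' E2' h1 h2 h3 h4 h5 h6 h7 h8 hcon
    rw [← hD_def] at this
    exact absurd (lt_of_le_of_lt this hup) (lt_irrefl _)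
  have h1 := key E1 E2 hE1m hE2m hE1 hE2 hM1 hM2 hE1fin hE2fin
  have h2 := key E2 E1 hE2m hE1m hE2 hE1 hM2 hM1 hE2fin hE1fin
  exact (abs_sub_lt_iff.2 ⟨by linarith, by linarith⟩).le

/-- Lemma 5.4: for `u ∈ Ṁ^{s,p}(X)` with `sp < σ`, the medians over
the annuli `A_{κ^j}(O)` converge, and the limit is independent of the basepoint. -/
theorem statement6 [BorelSpace X]
    (μ : Measure X) (hcomp : μ.IsComplete)
    (hball : ∀ (x : X) (r : ℝ), 0 < r → 0 < μ (ball x r) ∧ μ (ball x r) < ⊤)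
    (hdiam : EMetric.diam (Set.univ : Set X) = ⊤)
    (cμ : ℝ) (hcμ : 1 ≤ cμ)
    (hdoub : ∀ (x : X) (r : ℝ), 0 < r → μ (ball x (2 * r)) ≤ ENNReal.ofReal cμ * μ (ball x r))
    (cR κ : ℝ) (hcR0 : 0 < cR) (hcR1 : cR < 1) (hκ : 1 < κ)
    (hrev : ∀ (x : X) (r : ℝ), 0 < r → μ (ball x r) ≤ ENNReal.ofReal cR * μ (ball x (κ * r)))
    (σ cσ : ℝ) (hσ : 0 < σ) (hcσ : 0 < cσ)
    (hiter : ∀ (x : X) (r r₀ : ℝ), 0 < r → r < r₀ →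
      μ (ball x r) ≤ ENNReal.ofReal (cσ * (r / r₀) ^ σ) * μ (ball x r₀))
    (s p : ℝ) (hs0 : 0 < s) (hs1 : s ≤ 1) (hp : 0 < p) (hsp : s * p < σ)
    (u : X → ℝ) (hu : MemHomHajlasz μ s p u) :
    ∃ c : ℝ, ∀ O : X,
      Tendsto (fun j : ℕ => median μ u (ann κ O (κ ^ j))) atTop (𝓝 c) := by
  classical
  obtain ⟨humeas, g, hg, hgL⟩ := hu
  have hκ0 : (0:ℝ) < κ := lt_trans one_pos hκ
  have hcR1' : (0:ℝ) < 1 - cR := by linarith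
  -- choose a fixed basepoint
  obtain ⟨O₀⟩ : Nonempty X := by
    by_contra hne
    rw [not_nonempty_iff] at hne
    rw [Set.univ_eq_empty_iff.2 hne] at hdiam
    exact ENNReal.zero_ne_top ((Metric.ediam_empty).symm.trans hdiam)
  set β' : ℝ := (μ (ball O₀ 1)).toReal with hβ'_def
  have hβpos : 0 < β' :=
    ENNReal.toReal_pos (hball O₀ 1 one_pos).1.ne' (hball O₀ 1 one_pos).2.ne
  set m0 : ℝ := (1 - cR) * cσ⁻¹ with hm0_def
  have hm0pos : 0 < m0 := by positivity
  set L' : ℝ := (∫⁻ x, g x ^ p ∂μ).toReal with hL'_def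
  have hL'0 : 0 ≤ L' := ENNReal.toReal_nonneg
  set θ : ℝ := κ ^ (s - σ / p) with hθ_def
  have hθ0 : 0 ≤ θ := (Real.rpow_pos_of_pos hκ0 _).le
  have hθ1 : θ < 1 := by
    apply Real.rpow_lt_one_of_one_lt_of_neg hκ
    have : s < σ / p := (lt_div_iff₀ hp).2 hsp
    linarith
  set C : ℝ := 6 * 2 ^ s * ((κ:ℝ) ^ 2) ^ s * (2 * L' / (m0 * β')) ^ (1 / p) with hC_def
  -- basic annulus facts
  have hannm : ∀ (O : X) (r : ℝ), MeasurableSet (ann κ O r) := fun O r =>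
    measurableSet_ball.diff measurableSet_ball
  have hannsub : ∀ (O : X) (r : ℝ), ann κ O r ⊆ ball O (κ * r) := fun O r => diff_subset
  have hannfin : ∀ (O : X) (j : ℕ), μ (ann κ O ((κ:ℝ) ^ j)) < ⊤ := fun O j =>
    lt_of_le_of_lt (measure_mono (hannsub _ _)) (hball O _ (by positivity)).2
  -- annulus lower measure bound via reverse doubling
  have hannlow : ∀ (O : X) (r : ℝ), 0 < r →
      ENNReal.ofReal (1 - cR) * μ (ball O (κ * r)) ≤ μ (ann κ O r) := by
    intro O r hr
    have hsub : ball O (κ * r) ⊆ ann κ O r ∪ ball O r := fun x hx => by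
      by_cases h : x ∈ ball O r
      · exact Or.inr h
      · exact Or.inl ⟨hx, h⟩
    have h1 : μ (ball O (κ * r)) ≤ μ (ann κ O r) + ENNReal.ofReal cR * μ (ball O (κ * r)) :=
      (measure_mono hsub).trans ((measure_union_le (μ := μ) _ _).trans
        (add_le_add le_rfl (hrev O r hr)))
    have hfin2 : ENNReal.ofReal cR * μ (ball O (κ * r)) ≠ ⊤ :=
      ENNReal.mul_ne_top ENNReal.ofReal_ne_top (hball O _ (by positivity)).2.ne
    have h2 : ENNReal.ofReal (1 - cR) * μ (ball O (κ * r)) + ENNReal.ofReal cR * μ (ball O (κ * r))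
        = μ (ball O (κ * r)) := by
      rw [← add_mul, ← ENNReal.ofReal_add (by linarith) hcR0.le]
      norm_num
    rw [← ENNReal.add_le_add_iff_right hfin2, h2]
    exact h1
  -- lower bound for large balls via iterated reverse doubling
  have hballlow : ∀ (O : X) (n : ℕ), 1 ≤ n →
      ENNReal.ofReal (cσ⁻¹ * ((κ:ℝ) ^ n) ^ σ) * μ (ball O 1) ≤ μ (ball O ((κ:ℝ) ^ n)) := by
    intro O n hn
    have h1n : (1:ℝ) < κ ^ n := one_lt_pow₀ hκ (by omega)
    have hit := hiter O 1 (κ ^ n) one_pos h1n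
    calc ENNReal.ofReal (cσ⁻¹ * ((κ:ℝ) ^ n) ^ σ) * μ (ball O 1)
        ≤ ENNReal.ofReal (cσ⁻¹ * ((κ:ℝ) ^ n) ^ σ) *
            (ENNReal.ofReal (cσ * (1 / κ ^ n) ^ σ) * μ (ball O (κ ^ n))) :=
          mul_le_mul_right hit _
      _ = (ENNReal.ofReal (cσ⁻¹ * ((κ:ℝ) ^ n) ^ σ) * ENNReal.ofReal (cσ * (1 / κ ^ n) ^ σ)) *
            μ (ball O (κ ^ n)) := (mul_assoc _ _ _).symm
      _ = μ (ball O (κ ^ n)) := by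
          rw [← ENNReal.ofReal_mul (by positivity)]
          have heq : cσ⁻¹ * ((κ:ℝ) ^ n) ^ σ * (cσ * (1 / κ ^ n) ^ σ) = 1 := by
            rw [show cσ⁻¹ * ((κ:ℝ) ^ n) ^ σ * (cσ * (1 / κ ^ n) ^ σ)
                = (cσ⁻¹ * cσ) * (((κ:ℝ) ^ n) ^ σ * ((1 / κ ^ n : ℝ)) ^ σ) by ring,
              ← Real.mul_rpow (by positivity) (by positivity),
              mul_one_div, div_self (ne_of_gt (pow_pos hκ0 n)), Real.one_rpow,
              inv_mul_cancel₀ hcσ.ne']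
            norm_num
          rw [heq]
          simp
  -- combined lower bound for annuli centered at O₀
  have hannM : ∀ (j : ℕ),
      ENNReal.ofReal (m0 * ((κ:ℝ) ^ j) ^ σ * β') ≤ μ (ann κ O₀ ((κ:ℝ) ^ j)) := by
    intro j
    have hmono : ((κ:ℝ) ^ j) ^ σ ≤ ((κ:ℝ) ^ (j+1)) ^ σ :=
      Real.rpow_le_rpow (by positivity) (pow_le_pow_right₀ hκ.le (by omega)) hσ.le
    calc ENNReal.ofReal (m0 * ((κ:ℝ) ^ j) ^ σ * β')
        ≤ ENNReal.ofReal ((1 - cR) * (cσ⁻¹ * ((κ:ℝ) ^ (j+1)) ^ σ) * β') := by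
          apply ENNReal.ofReal_le_ofReal
          have h6 := mul_le_mul_of_nonneg_right
            (mul_le_mul_of_nonneg_left hmono hm0pos.le) hβpos.le
          rw [hm0_def] at h6 ⊢
          nlinarith [h6]
      _ = ENNReal.ofReal (1 - cR) * (ENNReal.ofReal (cσ⁻¹ * ((κ:ℝ) ^ (j+1)) ^ σ) *
            ENNReal.ofReal β') := by
          rw [ENNReal.ofReal_mul (by positivity), ENNReal.ofReal_mul (by positivity), mul_assoc]
      _ ≤ ENNReal.ofReal (1 - cR) * (ENNReal.ofReal (cσ⁻¹ * ((κ:ℝ) ^ (j+1)) ^ σ) *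
            μ (ball O₀ 1)) := by
          gcongr
          exact ENNReal.ofReal_toReal_le
      _ ≤ ENNReal.ofReal (1 - cR) * μ (ball O₀ ((κ:ℝ) ^ (j+1))) := by
          gcongr
          exact hballlow O₀ (j+1) (by omega)
      _ ≤ μ (ann κ O₀ ((κ:ℝ) ^ j)) := by
          have := hannlow O₀ ((κ:ℝ) ^ j) (by positivity)
          rwa [show κ * (κ:ℝ) ^ j = (κ:ℝ) ^ (j+1) by rw [pow_succ]; ring] at this
  -- the master estimate
  have est : ∀ (j : ℕ) (E1 E2 : Set X), MeasurableSet E1 → MeasurableSet E2 →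
      E1 ⊆ ball O₀ ((κ:ℝ) ^ (j+2)) → E2 ⊆ ball O₀ ((κ:ℝ) ^ (j+2)) →
      ENNReal.ofReal (m0 * ((κ:ℝ) ^ j) ^ σ * β') ≤ μ E1 →
      ENNReal.ofReal (m0 * ((κ:ℝ) ^ j) ^ σ * β') ≤ μ E2 →
      μ E1 < ⊤ → μ E2 < ⊤ →
      |median μ u E1 - median μ u E2| ≤ C * θ ^ j := by
    intro j E1 E2 hE1m hE2m hE1 hE2 hM1 hM2 hfin1 hfin2
    have hMpos : 0 < m0 * ((κ:ℝ) ^ j) ^ σ * β' := by positivity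
    have h := median_diff_le μ hcomp hs0 hp humeas hg hgL (z := O₀) (R := (κ:ℝ) ^ (j+2))
      (by positivity) hE1m hE2m hE1 hE2 hMpos hM1 hM2 hfin1 hfin2
    rwa [algebra_aux hκ hs0 hp hm0pos hβpos
      (L' := (∫⁻ x, g x ^ p ∂μ).toReal) ENNReal.toReal_nonneg j] at h
  -- Step 1 : Cauchy for the fixed basepoint
  have hdist : ∀ (n : ℕ), dist (median μ u (ann κ O₀ ((κ:ℝ) ^ n)))
      (median μ u (ann κ O₀ ((κ:ℝ) ^ (n+1)))) ≤ C * θ ^ n := by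
    intro n
    rw [Real.dist_eq]
    apply est n _ _ (hannm _ _) (hannm _ _)
    · refine (hannsub _ _).trans (ball_subset_ball ?_)
      rw [show κ * (κ:ℝ) ^ n = (κ:ℝ) ^ (n+1) by rw [pow_succ]; ring]
      exact pow_le_pow_right₀ hκ.le (by omega)
    · refine (hannsub _ _).trans (ball_subset_ball ?_)
      rw [show κ * (κ:ℝ) ^ (n+1) = (κ:ℝ) ^ (n+2) by rw [pow_succ]; ring]
    · exact hannM n
    · refine le_trans ?_ (hannM (n+1))
      apply ENNReal.ofReal_le_ofReal
      have hmono : ((κ:ℝ) ^ n) ^ σ ≤ ((κ:ℝ) ^ (n+1)) ^ σ :=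
        Real.rpow_le_rpow (by positivity) (pow_le_pow_right₀ hκ.le (by omega)) hσ.le
      exact mul_le_mul_of_nonneg_right (mul_le_mul_of_nonneg_left hmono hm0pos.le) hβpos.le
    · exact hannfin O₀ n
    · exact hannfin O₀ (n+1)
  have hcauchy : CauchySeq (fun j : ℕ => median μ u (ann κ O₀ ((κ:ℝ) ^ j))) :=
    cauchySeq_of_le_geometric θ C hθ1 hdist
  obtain ⟨c, hc⟩ := cauchySeq_tendsto_of_complete hcauchy
  refine ⟨c, fun O => ?_⟩
  -- Step 2 : compare medians with different basepoints
  have hev1 : ∀ᶠ j : ℕ in atTop, dist O O₀ ≤ (κ:ℝ) ^ j * (κ - 1) := by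
    have h := tendsto_pow_atTop_atTop_of_one_lt hκ
    filter_upwards [h.eventually_ge_atTop (dist O O₀ / (κ - 1))] with j hj
    rw [div_le_iff₀ (by linarith)] at hj
    exact hj
  have hevbound : ∀ᶠ j : ℕ in atTop,
      ‖median μ u (ann κ O ((κ:ℝ) ^ j)) - median μ u (ann κ O₀ ((κ:ℝ) ^ j))‖ ≤ C * θ ^ j := by
    filter_upwards [hev1, eventually_ge_atTop 1] with j hjd hj1
    rw [Real.norm_eq_abs]
    apply est j _ _ (hannm _ _) (hannm _ _)
    · -- ann κ O (κ^j) ⊆ ball O₀ (κ^(j+2))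
      intro x hx
      have hx1 : dist x O < κ * (κ:ℝ) ^ j := mem_ball.1 ((hannsub O _) hx)
      have h2 : dist x O₀ ≤ dist x O + dist O O₀ := dist_triangle x O O₀
      have h3 : κ * (κ:ℝ) ^ j + (κ:ℝ) ^ j * (κ - 1) ≤ (κ:ℝ) ^ (j+2) := by
        have h4 : (1:ℝ) ≤ (κ:ℝ) ^ j := one_le_pow₀ hκ.le
        have h5 : (κ:ℝ) ^ (j+2) = (κ:ℝ) ^ j * κ * κ := by ring
        nlinarith [sq_nonneg (κ - 1), pow_pos hκ0 j]
      exact mem_ball.2 (by linarith)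
    · refine (hannsub _ _).trans (ball_subset_ball ?_)
      rw [show κ * (κ:ℝ) ^ j = (κ:ℝ) ^ (j+1) by rw [pow_succ]; ring]
      exact pow_le_pow_right₀ hκ.le (by omega)
    · -- measure lower bound for ann κ O (κ^j)
      have hsub : ball O₀ ((κ:ℝ) ^ j) ⊆ ball O (κ * (κ:ℝ) ^ j) := by
        intro y hy
        have h2 : dist y O ≤ dist y O₀ + dist O₀ O := dist_triangle y O₀ O
        have h3 : dist y O₀ < (κ:ℝ) ^ j := mem_ball.1 hy
        have h4 : dist O₀ O ≤ (κ:ℝ) ^ j * (κ - 1) := by rwa [dist_comm]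
        have h5 : (κ:ℝ) ^ j + (κ:ℝ) ^ j * (κ - 1) = κ * (κ:ℝ) ^ j := by ring
        exact mem_ball.2 (by linarith)
      calc ENNReal.ofReal (m0 * ((κ:ℝ) ^ j) ^ σ * β')
          = ENNReal.ofReal (1 - cR) * ENNReal.ofReal (cσ⁻¹ * ((κ:ℝ) ^ j) ^ σ * β') := by
            rw [← ENNReal.ofReal_mul (by positivity)]
            congr 1
            rw [hm0_def]
            ring
        _ ≤ ENNReal.ofReal (1 - cR) * (ENNReal.ofReal (cσ⁻¹ * ((κ:ℝ) ^ j) ^ σ) *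
              μ (ball O₀ 1)) := by
            gcongr
            rw [ENNReal.ofReal_mul (by positivity)]
            gcongr
            exact ENNReal.ofReal_toReal_le
        _ ≤ ENNReal.ofReal (1 - cR) * μ (ball O₀ ((κ:ℝ) ^ j)) := by
            gcongr
            exact hballlow O₀ j hj1
        _ ≤ ENNReal.ofReal (1 - cR) * μ (ball O (κ * (κ:ℝ) ^ j)) :=
            mul_le_mul_right (measure_mono hsub) _
        _ ≤ μ (ann κ O ((κ:ℝ) ^ j)) := hannlow O _ (by positivity)
    · exact hannM j
    · exact hannfin O j
    · exact hannfin O₀ j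
  have htendC : Tendsto (fun j : ℕ => C * θ ^ j) atTop (𝓝 0) := by
    have h := (tendsto_pow_atTop_nhds_zero_of_lt_one hθ0 hθ1).const_mul C
    simpa using h
  have hdiff : Tendsto (fun j : ℕ => median μ u (ann κ O ((κ:ℝ) ^ j))
      - median μ u (ann κ O₀ ((κ:ℝ) ^ j))) atTop (𝓝 0) :=
    squeeze_zero_norm' hevbound htendC
  have hfinal := hc.add hdiff
  rw [add_zero] at hfinal
  refine hfinal.congr fun j => ?_
  ring


end Paper
end
end

section
/- Let 0 < s ≤ 1 and 0 < p < ∞ satisfy sp ≤ σ, where σ is an exponent from the iterated reverse doubling condition. If O ∈ X and E(O) ⊂ X is an (s,p)-thin set at infinity, then X ∖ E(O) is unbounded: for every N ∈ ℕ there exists x ∈ X ∖ E(O) with d(x,O) > N. -/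
open MeasureTheory Metric Set Filter
open scoped ENNReal NNReal Topology

noncomputable section
namespace Paper

variable {X : Type*} [MetricSpace X] [MeasurableSpace X]

/-- Remark 7.4: if `sp ≤ σ` and `E(O)` is `(s,p)`-thin at infinity,
then `X \ E(O)` is unbounded. -/
theorem statement8 [BorelSpace X]
    (μ : Measure X) (hcomp : μ.IsComplete)
    (hball : ∀ (x : X) (r : ℝ), 0 < r → 0 < μ (ball x r) ∧ μ (ball x r) < ⊤)
    (hdiam : EMetric.diam (Set.univ : Set X) = ⊤)
    (cμ : ℝ) (hcμ : 1 ≤ cμ)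
    (hdoub : ∀ (x : X) (r : ℝ), 0 < r → μ (ball x (2 * r)) ≤ ENNReal.ofReal cμ * μ (ball x r))
    (cR κ : ℝ) (hcR0 : 0 < cR) (hcR1 : cR < 1) (hκ : 1 < κ)
    (hrev : ∀ (x : X) (r : ℝ), 0 < r → μ (ball x r) ≤ ENNReal.ofReal cR * μ (ball x (κ * r)))
    (σ cσ : ℝ) (hσ : 0 < σ) (hcσ : 0 < cσ)
    (hiter : ∀ (x : X) (r r₀ : ℝ), 0 < r → r < r₀ →
      μ (ball x r) ≤ ENNReal.ofReal (cσ * (r / r₀) ^ σ) * μ (ball x r₀))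
    (s p : ℝ) (hs0 : 0 < s) (hs1 : s ≤ 1) (hp : 0 < p) (hsp : s * p ≤ σ)
    (O : X) (E : Set X) (hE : ThinAtInfinity μ s p κ O E) :
    ∀ N : ℕ, ∃ x : X, x ∉ E ∧ (N : ℝ) < dist x O := by
  intro N
  by_contra hcon
  push_neg at hcon
  have hEall : ∀ x : X, (N : ℝ) < dist x O → x ∈ E := by
    intro x hx
    by_contra hxE
    exact absurd (hcon x hxE) (not_le.2 hx)
  have hκ0 : (0:ℝ) < κ := lt_trans one_pos hκ
  have hsp0 : 0 < s * p := mul_pos hs0 hp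
  have h4κ : (0:ℝ) < 4 * κ := by linarith
  have h4κsp : (0:ℝ) < (4 * κ) ^ (s * p) := Real.rpow_pos_of_pos h4κ _
  set c0 : ℝ := (1 - cR) / (cσ * (4 * κ) ^ (s * p)) with hc0def
  have hc0 : 0 < c0 := div_pos (by linarith) (mul_pos hcσ h4κsp)
  set C : ℝ≥0∞ := ENNReal.ofReal c0 * μ (ball O 1) with hCdef
  have hC0 : 0 < C := ENNReal.mul_pos (ENNReal.ofReal_pos.2 hc0).ne' (hball O 1 one_pos).1.ne'
  -- Key lower bound on the relative capacity
  have key : ∀ r : ℝ, 1 < r → (N : ℝ) < r →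
      C ≤ relCap μ s p (E ∩ ann κ O r) (annL κ 2 O r) := by
    intro r hr1 hrN
    have hr0 : (0:ℝ) < r := lt_trans one_pos hr1
    have hκr : r ≤ κ * r := le_mul_of_one_le_left hr0.le hκ.le
    have hsub1 : ann κ O r ⊆ E := by
      intro x hx
      refine hEall x (lt_of_lt_of_le hrN ?_)
      have := hx.2
      simp only [mem_ball, not_lt] at this
      exact this
    have hannF : ann κ O r ⊆ annL κ 2 O r := by
      intro x hx
      refine ⟨ball_subset_ball (by nlinarith) hx.1, fun hx2 => hx.2 (ball_subset_ball (by linarith) hx2)⟩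
    have hFball : annL κ 2 O r ⊆ ball O (2 * (κ * r)) := fun x hx => hx.1
    have hdiamF : Metric.diam (annL κ 2 O r) ≤ 4 * κ * r := by
      calc Metric.diam (annL κ 2 O r) ≤ Metric.diam (ball O (2 * (κ * r))) :=
            diam_mono hFball isBounded_ball
        _ ≤ 2 * (2 * (κ * r)) := diam_ball (by positivity)
        _ = 4 * κ * r := by ring
    -- measure of the annulus
    have hBrtop : μ (ball O r) ≠ ⊤ := (hball O r hr0).2.ne
    have hannμ : ENNReal.ofReal (1 - cR) * μ (ball O r) ≤ μ (ann κ O r) := by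
      have hdiff : μ (ann κ O r) = μ (ball O (κ * r)) - μ (ball O r) :=
        measure_diff (ball_subset_ball hκr) measurableSet_ball.nullMeasurableSet hBrtop
      rw [hdiff]
      calc ENNReal.ofReal (1 - cR) * μ (ball O r)
          ≤ ENNReal.ofReal (1 - cR) * μ (ball O (κ * r)) :=
            mul_le_mul_right (measure_mono (ball_subset_ball hκr)) _
        _ ≤ μ (ball O (κ * r)) - μ (ball O r) := by
            refine ENNReal.le_sub_of_add_le_left hBrtop ?_
            calc μ (ball O r) + ENNReal.ofReal (1 - cR) * μ (ball O (κ * r))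
                ≤ ENNReal.ofReal cR * μ (ball O (κ * r)) +
                  ENNReal.ofReal (1 - cR) * μ (ball O (κ * r)) :=
                  add_le_add_left (hrev O r hr0) _
              _ = ENNReal.ofReal (cR + (1 - cR)) * μ (ball O (κ * r)) := by
                  rw [ENNReal.ofReal_add hcR0.le (by linarith), add_mul]
              _ = μ (ball O (κ * r)) := by
                  have : cR + (1 - cR) = 1 := by ring
                  rw [this, ENNReal.ofReal_one, one_mul]
    have hμann0 : μ (ann κ O r) ≠ 0 := by
      refine (lt_of_lt_of_le ?_ hannμ).ne'
      exact ENNReal.mul_pos (ENNReal.ofReal_pos.2 (by linarith)).ne' (hball O r hr0).1.ne'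
    have hrσ : (0:ℝ) < r ^ σ := Real.rpow_pos_of_pos hr0 _
    have hA : ENNReal.ofReal (r ^ σ / cσ) * μ (ball O 1) ≤ μ (ball O r) := by
      have h := hiter O 1 r one_pos hr1
      calc ENNReal.ofReal (r ^ σ / cσ) * μ (ball O 1)
          ≤ ENNReal.ofReal (r ^ σ / cσ) * (ENNReal.ofReal (cσ * (1 / r) ^ σ) * μ (ball O r)) :=
            mul_le_mul_right h _
        _ = ENNReal.ofReal ((r ^ σ / cσ) * (cσ * (1 / r) ^ σ)) * μ (ball O r) := by
            rw [← mul_assoc, ← ENNReal.ofReal_mul (by positivity)]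
        _ = μ (ball O r) := by
            have h1 : (1 / r) ^ σ = 1 / r ^ σ := by
              rw [Real.div_rpow zero_le_one hr0.le, Real.one_rpow]
            have : (r ^ σ / cσ) * (cσ * (1 / r) ^ σ) = 1 := by
              rw [h1]; field_simp
            rw [this, ENNReal.ofReal_one, one_mul]
    set D : ℝ≥0∞ := ENNReal.ofReal (Metric.diam (annL κ 2 O r) ^ (s * p)) with hDdef
    have hCD : C * D ≤ μ (ann κ O r) := by
      calc C * D ≤ C * ENNReal.ofReal ((4 * κ * r) ^ (s * p)) := by
            refine mul_le_mul_right (ENNReal.ofReal_le_ofReal ?_) C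
            exact Real.rpow_le_rpow Metric.diam_nonneg hdiamF hsp0.le
        _ = ENNReal.ofReal (c0 * (4 * κ * r) ^ (s * p)) * μ (ball O 1) := by
            rw [hCdef, mul_right_comm, ← ENNReal.ofReal_mul hc0.le]
        _ ≤ ENNReal.ofReal ((1 - cR) * (r ^ σ / cσ)) * μ (ball O 1) := by
            refine mul_le_mul_left (ENNReal.ofReal_le_ofReal ?_) _
            have hmul : (4 * κ * r) ^ (s * p) = (4 * κ) ^ (s * p) * r ^ (s * p) :=
              Real.mul_rpow h4κ.le hr0.le
            have heq : c0 * (4 * κ * r) ^ (s * p) = (1 - cR) * (r ^ (s * p) / cσ) := by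
              rw [hmul, hc0def]; field_simp
            rw [heq]
            have hle : r ^ (s * p) ≤ r ^ σ := Real.rpow_le_rpow_of_exponent_le hr1.le hsp
            have h1cR : (0:ℝ) ≤ 1 - cR := by linarith
            gcongr
        _ = ENNReal.ofReal (1 - cR) * (ENNReal.ofReal (r ^ σ / cσ) * μ (ball O 1)) := by
            rw [ENNReal.ofReal_mul (by linarith), mul_assoc]
        _ ≤ ENNReal.ofReal (1 - cR) * μ (ball O r) := mul_le_mul_right hA _
        _ ≤ μ (ann κ O r) := hannμ
    have hCle : C ≤ μ (ann κ O r) / D :=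
      (ENNReal.le_div_iff_mul_le (Or.inr hμann0) (Or.inl ENNReal.ofReal_ne_top)).2 hCD
    rw [relCap]
    refine le_iInf fun v => le_iInf fun hv => ?_
    have hf : Measurable fun x => ENNReal.ofReal |v x| ^ p := by
      have hm : Measurable v := hv.1.1
      fun_prop
    have hμle : μ (ann κ O r) ≤ lpNormP μ p v (annL κ 2 O r) := by
      rw [lpNormP]
      calc μ (ann κ O r) = ∫⁻ _ in ann κ O r, 1 ∂μ := (setLIntegral_one _).symm
        _ ≤ ∫⁻ x in ann κ O r, ENNReal.ofReal |v x| ^ p ∂μ := by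
            refine setLIntegral_mono hf fun x hx => ?_
            have h1 : 1 ≤ v x := hv.2.2 x ⟨hsub1 hx, hx⟩
            calc (1:ℝ≥0∞) = 1 ^ p := (ENNReal.one_rpow p).symm
              _ ≤ ENNReal.ofReal |v x| ^ p := by
                  refine ENNReal.rpow_le_rpow ?_ hp.le
                  exact ENNReal.one_le_ofReal.2 (le_trans h1 (le_abs_self _))
        _ ≤ ∫⁻ x in annL κ 2 O r, ENNReal.ofReal |v x| ^ p ∂μ := lintegral_mono_set hannF
    refine le_trans (le_trans hCle (ENNReal.div_le_div_right hμle _)) le_self_add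
  -- conclude
  have ht := hE 2 one_lt_two
  have hev := ht.eventually_lt_const hC0
  rw [eventually_atTop] at hev
  obtain ⟨m₀, hm₀⟩ := hev
  obtain ⟨n, hn⟩ := pow_unbounded_of_one_lt (N : ℝ) hκ
  set m := max (max m₀ n) 1 with hmdef
  have hm1 : 1 ≤ m := le_max_right _ _
  have hr1 : 1 < κ ^ m := one_lt_pow₀ hκ (by omega)
  have hrN : (N : ℝ) < κ ^ m := by
    refine lt_of_lt_of_le hn (pow_le_pow_right₀ hκ.le ?_)
    exact le_trans (le_max_right m₀ n) (le_max_left _ _)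
  have hterm := key (κ ^ m) hr1 hrN
  have htsum : C ≤ ∑' j : ℕ, relCap μ s p (E ∩ ann κ O (κ ^ (m + j))) (annL κ 2 O (κ ^ (m + j))) := by
    refine le_trans ?_ (ENNReal.le_tsum 0)
    simpa using hterm
  have hSm := hm₀ m (le_trans (le_max_left m₀ n) (le_max_left _ _))
  exact absurd hSm (not_lt.2 htsum)

end Paper
end
end

section
/- Let 0 < s ≤ 1 and 0 < p < ∞ satisfy sp ≤ σ, where σ is an exponent from the iterated reverse doubling condition. Let u : X → ℝ be measurable and finite μ-a.e., let O ∈ X, and let E(O) ⊂ X be an (s,p)-thin set at infinity such that lim_{d(x,O)→∞, x ∈ X∖E(O)} u(x) = c for some c ∈ ℝ. Then lim_{j→∞} m_u(A_{κ^j}(O)) = c. -/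
open MeasureTheory Metric Set Filter
open scoped ENNReal NNReal Topology

noncomputable section
namespace Paper

variable {X : Type*} [MetricSpace X] [MeasurableSpace X]

private lemma relCap_lower {X : Type*} [MetricSpace X] [MeasurableSpace X]
    (μ : Measure X) (s p : ℝ) (hp : 0 < p) {S F : Set X} (hSF : S ⊆ F) (hF : MeasurableSet F) :
    μ S / ENNReal.ofReal (Metric.diam F ^ (s * p)) ≤ relCap μ s p S F := by
  rw [relCap]
  refine le_iInf₂ fun v hv => le_trans (ENNReal.div_le_div_right ?_ _) le_self_add
  obtain ⟨⟨hvm, -⟩, -, hv1⟩ := hv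
  have hmeas : Measurable fun x => ENNReal.ofReal |v x| ^ p :=
    (hvm.abs.ennreal_ofReal).pow measurable_const
  calc μ S = (μ.restrict F) S := by
        rw [Measure.restrict_apply' hF, Set.inter_eq_self_of_subset_left hSF]
    _ ≤ (μ.restrict F) {x | 1 ≤ ENNReal.ofReal |v x| ^ p} := by
        refine measure_mono fun x hx => ?_
        have h1 : (1:ℝ≥0∞) ≤ ENNReal.ofReal |v x| := by
          rw [show (1:ℝ≥0∞) = ENNReal.ofReal 1 from ENNReal.ofReal_one.symm]
          exact ENNReal.ofReal_le_ofReal ((hv1 x hx).trans (le_abs_self _))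
        calc (1:ℝ≥0∞) = 1 ^ p := (ENNReal.one_rpow p).symm
          _ ≤ ENNReal.ofReal |v x| ^ p := ENNReal.rpow_le_rpow h1 hp.le
    _ ≤ ∫⁻ x in F, ENNReal.ofReal |v x| ^ p ∂μ := by
        simpa using mul_meas_ge_le_lintegral₀ (μ := μ.restrict F) hmeas.aemeasurable 1

/-- Theorem 7.5: if `sp ≤ σ`, `E(O)` is `(s,p)`-thin at infinity and
`u(x) → c` as `d(x,O) → ∞` along `X \ E(O)`, then the medians over the annuli
`A_{κ^j}(O)` also converge to `c`. -/
theorem statement9 [BorelSpace X]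
    (μ : Measure X) (hcomp : μ.IsComplete)
    (hball : ∀ (x : X) (r : ℝ), 0 < r → 0 < μ (ball x r) ∧ μ (ball x r) < ⊤)
    (hdiam : EMetric.diam (Set.univ : Set X) = ⊤)
    (cμ : ℝ) (hcμ : 1 ≤ cμ)
    (hdoub : ∀ (x : X) (r : ℝ), 0 < r → μ (ball x (2 * r)) ≤ ENNReal.ofReal cμ * μ (ball x r))
    (cR κ : ℝ) (hcR0 : 0 < cR) (hcR1 : cR < 1) (hκ : 1 < κ)
    (hrev : ∀ (x : X) (r : ℝ), 0 < r → μ (ball x r) ≤ ENNReal.ofReal cR * μ (ball x (κ * r)))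
    (σ cσ : ℝ) (hσ : 0 < σ) (hcσ : 0 < cσ)
    (hiter : ∀ (x : X) (r r₀ : ℝ), 0 < r → r < r₀ →
      μ (ball x r) ≤ ENNReal.ofReal (cσ * (r / r₀) ^ σ) * μ (ball x r₀))
    (s p : ℝ) (hs0 : 0 < s) (hs1 : s ≤ 1) (hp : 0 < p) (hsp : s * p ≤ σ)
    (u : X → ℝ) (hu : Measurable u)
    (O : X) (E : Set X) (hE : ThinAtInfinity μ s p κ O E)
    (c : ℝ) (hlim : TendstoOutside O E u c) :
    Tendsto (fun j : ℕ => median μ u (ann κ O (κ ^ j))) atTop (𝓝 c) := by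
  have hκ0 : (0:ℝ) < κ := lt_trans one_pos hκ
  have hsp' : 0 < s * p := mul_pos hs0 hp
  obtain ⟨hb1pos, hb1fin⟩ := hball O 1 one_pos
  set γ : ℝ := (1 - cR) / (2 * cσ) with hγdef
  have hγpos : 0 < γ := div_pos (by linarith) (by linarith)
  set β : ℝ≥0∞ := ENNReal.ofReal γ * μ (ball O 1) with hβdef
  have hβ0 : β ≠ 0 := mul_ne_zero (ENNReal.ofReal_pos.mpr hγpos).ne' hb1pos.ne'
  have hβtop : β ≠ ⊤ := ENNReal.mul_ne_top ENNReal.ofReal_ne_top hb1fin.ne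
  have hKpos : (0:ℝ) < (2 * (2 * κ)) ^ (s * p) := Real.rpow_pos_of_pos (by linarith) _
  set K : ℝ≥0∞ := ENNReal.ofReal ((2 * (2 * κ)) ^ (s * p)) with hKdef
  have hK0 : K ≠ 0 := (ENNReal.ofReal_pos.mpr hKpos).ne'
  have hKtop : K ≠ ⊤ := ENNReal.ofReal_ne_top
  set δ : ℝ≥0∞ := β / 2 / K with hδdef
  have hδ0 : δ ≠ 0 := by
    rw [hδdef, Ne, ENNReal.div_eq_zero_iff, ENNReal.div_eq_zero_iff]
    push_neg
    exact ⟨⟨hβ0, by simp⟩, hKtop⟩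
  have hδtop : δ ≠ ⊤ := by
    rw [hδdef, div_eq_mul_inv]
    refine ENNReal.mul_ne_top ?_ (ENNReal.inv_ne_top.mpr hK0)
    simp [ENNReal.div_eq_top, hβtop]
  have hδK : δ * K = β / 2 := ENNReal.div_mul_cancel hK0 hKtop
  have hAfin : ∀ m : ℕ, μ (ann κ O (κ ^ m)) ≠ ⊤ := by
    intro m
    have h := hball O (κ * κ ^ m) (by positivity)
    exact (lt_of_le_of_lt (measure_mono Set.diff_subset) h.2).ne
  -- lower bound for the measure of annuli
  have hAlow : ∀ m : ℕ,
      ENNReal.ofReal (γ * (κ ^ m) ^ (s * p)) * μ (ball O 1) ≤ μ (ann κ O (κ ^ m)) / 2 := by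
    intro m
    set r : ℝ := κ ^ m with hrdef
    have hr : 0 < r := pow_pos hκ0 m
    have hr1 : 1 ≤ r := one_le_pow₀ hκ.le
    have hκr : r < κ * r := by nlinarith
    have hsmall := hball O r hr
    have hbig := hball O (κ * r) (by positivity)
    have hsub : ball O r ⊆ ball O (κ * r) := ball_subset_ball hκr.le
    have hdiff : μ (ann κ O r) = μ (ball O (κ * r)) - μ (ball O r) := by
      rw [ann]
      exact measure_diff hsub measurableSet_ball.nullMeasurableSet hsmall.2.ne
    have hlow1 : ENNReal.ofReal (1 - cR) * μ (ball O (κ * r)) ≤ μ (ann κ O r) := by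
      rw [hdiff]
      have heq : ENNReal.ofReal (1 - cR) * μ (ball O (κ * r))
          = μ (ball O (κ * r)) - ENNReal.ofReal cR * μ (ball O (κ * r)) := by
        rw [ENNReal.ofReal_sub _ hcR0.le, ENNReal.sub_mul (fun _ _ => hbig.2.ne),
          ENNReal.ofReal_one, one_mul]
      rw [heq]
      exact tsub_le_tsub_left (hrev O r hr) _
    have hone : (1:ℝ) < κ * r := lt_of_le_of_lt hr1 hκr
    have hiter' := hiter O 1 (κ * r) one_pos hone
    have hT : (0:ℝ) < (κ * r) ^ σ := Real.rpow_pos_of_pos (by positivity) _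
    have htT : r ^ (s * p) ≤ (κ * r) ^ σ :=
      le_trans (Real.rpow_le_rpow_of_exponent_le hr1 hsp)
        (Real.rpow_le_rpow hr.le hκr.le hσ.le)
    have hreal : γ * r ^ (s * p) * (cσ * (1 / (κ * r)) ^ σ) ≤ (1 - cR) / 2 := by
      have h1 : (1 / (κ * r)) ^ σ = ((κ * r) ^ σ)⁻¹ := by
        rw [one_div, ← Real.inv_rpow (by positivity)]
      rw [h1, hγdef]
      have ht : (0:ℝ) < r ^ (s * p) := Real.rpow_pos_of_pos hr _
      have hdiv : r ^ (s * p) / (κ * r) ^ σ ≤ 1 := (div_le_one hT).mpr htT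
      have hkey : (1 - cR) / (2 * cσ) * r ^ (s * p) * (cσ * ((κ * r) ^ σ)⁻¹)
          = (1 - cR) / 2 * (r ^ (s * p) / (κ * r) ^ σ) := by
        field_simp
      rw [hkey]
      nlinarith [mul_le_mul_of_nonneg_left hdiv (by linarith : (0:ℝ) ≤ (1 - cR) / 2)]
    calc ENNReal.ofReal (γ * r ^ (s * p)) * μ (ball O 1)
        ≤ ENNReal.ofReal (γ * r ^ (s * p)) *
            (ENNReal.ofReal (cσ * (1 / (κ * r)) ^ σ) * μ (ball O (κ * r))) :=
          mul_le_mul_right hiter' _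
      _ = ENNReal.ofReal (γ * r ^ (s * p) * (cσ * (1 / (κ * r)) ^ σ)) * μ (ball O (κ * r)) := by
          rw [← mul_assoc, ← ENNReal.ofReal_mul (by positivity)]
      _ ≤ ENNReal.ofReal ((1 - cR) / 2) * μ (ball O (κ * r)) :=
          mul_le_mul_left (ENNReal.ofReal_le_ofReal hreal) _
      _ = ENNReal.ofReal (1 - cR) * μ (ball O (κ * r)) / 2 := by
          rw [ENNReal.ofReal_div_of_pos two_pos, ENNReal.ofReal_ofNat,
            div_eq_mul_inv, div_eq_mul_inv, mul_right_comm]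
      _ ≤ μ (ann κ O r) / 2 := ENNReal.div_le_div_right hlow1 _
  -- the key measure estimate from the capacity bound
  have hEA : ∀ m : ℕ, relCap μ s p (E ∩ ann κ O (κ ^ m)) (annL κ 2 O (κ ^ m)) < δ →
      μ (E ∩ ann κ O (κ ^ m)) < μ (ann κ O (κ ^ m)) / 2 := by
    intro m hcaplt
    have hr : (0:ℝ) < κ ^ m := pow_pos hκ0 m
    have hsub : E ∩ ann κ O (κ ^ m) ⊆ annL κ 2 O (κ ^ m) := by
      rintro x ⟨-, hx1, hx2⟩
      exact ⟨ball_subset_ball (by nlinarith) hx1,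
        fun h => hx2 (ball_subset_ball (by nlinarith) h)⟩
    have hFmeas : MeasurableSet (annL κ 2 O (κ ^ m)) :=
      measurableSet_ball.diff measurableSet_ball
    have hcap := relCap_lower μ s p hp hsub hFmeas
    set D : ℝ≥0∞ := ENNReal.ofReal (Metric.diam (annL κ 2 O (κ ^ m)) ^ (s * p)) with hDdef
    have hμD : μ (E ∩ ann κ O (κ ^ m)) ≤ δ * D := by
      rcases eq_or_ne D 0 with hD | hD
      · have h0 : μ (E ∩ ann κ O (κ ^ m)) = 0 := by
          by_contra h
          rw [hD, ENNReal.div_zero h] at hcap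
          exact absurd (lt_of_le_of_lt hcap hcaplt) (not_lt.mpr le_top)
        simp [h0]
      · calc μ (E ∩ ann κ O (κ ^ m))
            = μ (E ∩ ann κ O (κ ^ m)) / D * D :=
              (ENNReal.div_mul_cancel hD ENNReal.ofReal_ne_top).symm
          _ ≤ δ * D := mul_le_mul_left (hcap.trans hcaplt.le) _
    have hD_le : D ≤ K * ENNReal.ofReal ((κ ^ m) ^ (s * p)) := by
      have hbnd : Metric.diam (annL κ 2 O (κ ^ m)) ≤ 2 * (2 * (κ * κ ^ m)) := by
        refine le_trans (Metric.diam_mono Set.diff_subset Metric.isBounded_ball) ?_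
        exact Metric.diam_ball (by positivity)
      have h2 : Metric.diam (annL κ 2 O (κ ^ m)) ^ (s * p) ≤ (2 * (2 * κ) * κ ^ m) ^ (s * p) := by
        refine Real.rpow_le_rpow Metric.diam_nonneg ?_ hsp'.le
        calc Metric.diam (annL κ 2 O (κ ^ m)) ≤ 2 * (2 * (κ * κ ^ m)) := hbnd
          _ = 2 * (2 * κ) * κ ^ m := by ring
      calc D ≤ ENNReal.ofReal ((2 * (2 * κ) * κ ^ m) ^ (s * p)) := ENNReal.ofReal_le_ofReal h2
        _ = K * ENNReal.ofReal ((κ ^ m) ^ (s * p)) := by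
            rw [Real.mul_rpow (by positivity) (by positivity), ENNReal.ofReal_mul hKpos.le]
    calc μ (E ∩ ann κ O (κ ^ m)) ≤ δ * D := hμD
      _ ≤ δ * (K * ENNReal.ofReal ((κ ^ m) ^ (s * p))) := mul_le_mul_right hD_le _
      _ = β / 2 * ENNReal.ofReal ((κ ^ m) ^ (s * p)) := by rw [← mul_assoc, hδK]
      _ < β * ENNReal.ofReal ((κ ^ m) ^ (s * p)) := by
          refine ENNReal.mul_lt_mul_left ?_ ENNReal.ofReal_ne_top
            (ENNReal.half_lt_self hβ0 hβtop)
          exact (ENNReal.ofReal_pos.mpr (Real.rpow_pos_of_pos hr _)).ne'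
      _ = ENNReal.ofReal (γ * (κ ^ m) ^ (s * p)) * μ (ball O 1) := by
          rw [hβdef, ENNReal.ofReal_mul hγpos.le]; ring
      _ ≤ μ (ann κ O (κ ^ m)) / 2 := hAlow m
  have hthin := hE 2 one_lt_two
  have hev1 : ∀ᶠ m : ℕ in atTop,
      relCap μ s p (E ∩ ann κ O (κ ^ m)) (annL κ 2 O (κ ^ m)) < δ := by
    have h := hthin.eventually_lt_const (pos_iff_ne_zero.mpr hδ0)
    filter_upwards [h] with m hm
    exact lt_of_le_of_lt (ENNReal.le_tsum 0) hm
  rw [Metric.tendsto_atTop]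
  intro ε hε
  obtain ⟨N, hN⟩ := hlim (ε / 2) (half_pos hε)
  have hev2 : ∀ᶠ m : ℕ in atTop, (N : ℝ) < κ ^ m :=
    (tendsto_pow_atTop_atTop_of_one_lt hκ).eventually_gt_atTop _
  obtain ⟨M, hM⟩ := Filter.eventually_atTop.mp (hev1.and hev2)
  refine ⟨M, fun m hm => ?_⟩
  obtain ⟨hm1, hm2⟩ := hM m hm
  set A := ann κ O (κ ^ m) with hAdef
  have hhalf : μ (E ∩ A) < μ A / 2 := hEA m hm1
  have hAfin' := hAfin m
  have hux : ∀ x ∈ A, x ∉ E → |u x - c| < ε / 2 := by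
    intro x hxA hxE
    refine hN x hxE ?_
    have h : κ ^ m ≤ dist x O := le_of_not_gt fun h => hxA.2 (mem_ball.mpr h)
    linarith
  set S := {a : ℝ | μ {x | x ∈ A ∧ a < u x} < μ A / 2} with hSdef
  have hmem : c + ε / 2 ∈ S := by
    refine lt_of_le_of_lt (measure_mono fun x hx => ?_) hhalf
    obtain ⟨hxA, hxu⟩ := hx
    refine ⟨?_, hxA⟩
    by_contra hxE
    have h := (abs_lt.mp (hux x hxA hxE)).2
    linarith
  have hlb : ∀ a ∈ S, c - ε / 2 ≤ a := by
    intro a ha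
    by_contra hcon
    push_neg at hcon
    have hsub2 : A \ E ⊆ {x | x ∈ A ∧ a < u x} := by
      intro x hx
      refine ⟨hx.1, ?_⟩
      have h := (abs_lt.mp (hux x hx.1 hx.2)).1
      linarith
    have h1 : μ A - μ (E ∩ A) ≤ μ (A \ E) := by
      rw [show A \ E = A \ (E ∩ A) from (Set.diff_inter_self_eq_diff).symm]
      exact le_measure_diff
    have h2 : μ A / 2 < μ A - μ (E ∩ A) := by
      rw [lt_tsub_iff_right]
      calc μ A / 2 + μ (E ∩ A) < μ A / 2 + μ A / 2 :=
            ENNReal.add_lt_add_left (by simp [ENNReal.div_eq_top]; exact hAfin') hhalf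
        _ = μ A := ENNReal.add_halves _
    have h3 : μ A / 2 < μ {x | x ∈ A ∧ a < u x} :=
      h2.trans_le (h1.trans (measure_mono hsub2))
    exact lt_asymm h3 ha
  have hne : S.Nonempty := ⟨_, hmem⟩
  have hbdd : BddBelow S := ⟨c - ε / 2, hlb⟩
  have h3 : sInf S ≤ c + ε / 2 := csInf_le hbdd hmem
  have h4 : c - ε / 2 ≤ sInf S := le_csInf hne hlb
  have hmedian : median μ u A = sInf S := rfl
  rw [Real.dist_eq, hmedian, abs_lt]
  constructor <;> linarith


end Paper
end
end
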